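/- arXiv:2507.06657 — 5 statements merged into one kernel-verified Lean document; each statement's English description precedes it below -/
import Mathlib

section
/- Let H be a real inner product space, X a set, and e : X → H a feature map; define K(x,y) = ⟪e(x), e(y)⟫ for x,y ∈ X. Let x₁,…,xₙ ∈ X be points whose Gram matrix G = (K(xᵢ,xⱼ))₁≤i,j≤n is invertible, let f ∈ H, and define the minimal-norm interpolator f̂(x) = Σᵢ wᵢ(x)·⟪f, e(xᵢ)⟫ where w(x) = G⁻¹·(K(xᵢ,x))ᵢ, and the power function C(x) = K(x,x) − Σ_{i,j} K(x,xᵢ)(G⁻¹)ᵢⱼK(xⱼ,x). Then for every x ∈ X, |⟪f, e(x)⟫ − f̂(x)| ≤ ‖f‖·√(C(x)). -/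
open scoped RealInnerProductSpace

/-- Approximation error bound in an RKHS (feature-map formulation):
for the minimal-norm interpolator `f̂` at points `x₁,…,xₙ` with invertible
Gram matrix, `|f(x) − f̂(x)| ≤ ‖f‖ √(C(x))` where `C` is the power function. -/
theorem rkhs_approx_error_bound
    {H X : Type*} [NormedAddCommGroup H] [InnerProductSpace ℝ H]
    (e : X → H) (K : X → X → ℝ) (hK : ∀ a b, K a b = ⟪e a, e b⟫)
    (n : ℕ) (x : Fin n → X)
    (G : Matrix (Fin n) (Fin n) ℝ)
    (hG : ∀ i j, G i j = K (x i) (x j))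
    (hGinv : IsUnit G.det)
    (f : H)
    (w : X → Fin n → ℝ)
    (hw : ∀ y i, w y i = ∑ j, G⁻¹ i j * K (x j) y)
    (fhat : X → ℝ)
    (hfhat : ∀ y, fhat y = ∑ i, w y i * ⟪f, e (x i)⟫)
    (C : X → ℝ)
    (hC : ∀ y, C y = K y y - ∑ i, ∑ j, K y (x i) * G⁻¹ i j * K (x j) y) :
    ∀ y : X, |⟪f, e y⟫ - fhat y| ≤ ‖f‖ * Real.sqrt (C y) := by
  intro y
  have hKsymm : ∀ a b, K a b = K b a := fun a b => by rw [hK, hK, real_inner_comm]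
  set s : H := ∑ i, w y i • e (x i) with hs
  have hinv : G * G⁻¹ = 1 := Matrix.mul_nonsing_inv G hGinv
  have hGmul : ∀ i, ∑ j, G i j * w y j = K (x i) y := by
    intro i
    calc ∑ j, G i j * w y j = ∑ j, ∑ k, G i j * G⁻¹ j k * K (x k) y := by
          simp [hw, Finset.mul_sum, mul_assoc]
      _ = ∑ k, (∑ j, G i j * G⁻¹ j k) * K (x k) y := by
          rw [Finset.sum_comm]; simp [Finset.sum_mul]
      _ = ∑ k, (G * G⁻¹) i k * K (x k) y := by simp [Matrix.mul_apply]
      _ = K (x i) y := by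
          rw [hinv]
          simp [Matrix.one_apply]
  have hesy : ∀ i, (⟪e (x i), s⟫ : ℝ) = K (x i) y := by
    intro i
    rw [hs, inner_sum]
    rw [← hGmul i]
    refine Finset.sum_congr rfl fun j _ => ?_
    rw [real_inner_smul_right, ← hK, ← hG, mul_comm]
  have hsy : (⟪s, e y⟫ : ℝ) = ∑ i, w y i * K (x i) y := by
    rw [hs, sum_inner]
    refine Finset.sum_congr rfl fun i _ => ?_
    rw [real_inner_smul_left, ← hK]
  have hss : (⟪s, s⟫ : ℝ) = ∑ i, w y i * K (x i) y := by
    rw [hs, sum_inner]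
    refine Finset.sum_congr rfl fun i _ => ?_
    rw [real_inner_smul_left, ← hs, hesy i]
  have hrr : (⟪e y - s, e y - s⟫ : ℝ) = C y := by
    have h1 : (⟪e y - s, e y - s⟫ : ℝ)
        = ⟪e y, e y⟫ - ⟪e y, s⟫ - ⟪s, e y⟫ + ⟪s, s⟫ := by
      rw [inner_sub_left, inner_sub_right, inner_sub_right]; ring
    have hsy' : (⟪e y, s⟫ : ℝ) = ∑ i, w y i * K (x i) y := by
      rw [real_inner_comm]; exact hsy
    rw [h1, hsy, hsy', hss, ← hK, hC y]
    have h2 : ∑ i, w y i * K (x i) y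
        = ∑ i, ∑ j, K y (x i) * G⁻¹ i j * K (x j) y := by
      refine Finset.sum_congr rfl fun i _ => ?_
      rw [hw, Finset.sum_mul]
      refine Finset.sum_congr rfl fun j _ => ?_
      rw [hKsymm y (x i)]; ring
    rw [h2]; ring
  have hfs : (⟪f, s⟫ : ℝ) = fhat y := by
    rw [hs, inner_sum, hfhat]
    refine Finset.sum_congr rfl fun i _ => ?_
    rw [real_inner_smul_right, mul_comm]
  have hmain : ⟪f, e y⟫ - fhat y = ⟪f, e y - s⟫ := by
    rw [inner_sub_right, hfs]
  rw [hmain]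
  have hnorm : ‖e y - s‖ = Real.sqrt (C y) := by
    rw [← hrr, real_inner_self_eq_norm_sq, Real.sqrt_sq (norm_nonneg _)]
  rw [← hnorm]
  exact abs_real_inner_le_norm f (e y - s)
end

section
/- Let n ≥ 2, let 0 ≤ x₁ < x₂ < … < xₙ ≤ 1, and let K(x,y) = cosh(min(x,y))·cosh(1−max(x,y))/sinh(1). Define the symmetric tridiagonal n×n matrix T with diagonal entries α₁ = tanh(x₁) + coth(x₂−x₁), αᵢ = coth(x_{i+1}−xᵢ) + coth(xᵢ−x_{i−1}) for 2 ≤ i ≤ n−1, αₙ = coth(xₙ−x_{n−1}) + tanh(1−xₙ), and off-diagonal entries T_{i,i+1} = T_{i+1,i} = βᵢ = −1/sinh(x_{i+1}−xᵢ) for 1 ≤ i ≤ n−1, all other entries zero. Then the Gram matrix G = (K(xᵢ,xⱼ))₁≤i,j≤n is invertible and G⁻¹ = T (equivalently, G·T is the identity matrix). -/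
noncomputable def coth (t : ℝ) : ℝ := Real.cosh t / Real.sinh t

lemma brk1 (u v w : ℝ) (hw : w = u + v) (hv : Real.sinh v ≠ 0) :
    Real.cosh u * coth v - Real.cosh w / Real.sinh v = -Real.sinh u := by
  subst hw; rw [coth, Real.cosh_add]; field_simp; ring

lemma brk2 (u v w : ℝ) (hw : w = u - v) (hv : Real.sinh v ≠ 0) :
    Real.cosh u * coth v - Real.cosh w / Real.sinh v = Real.sinh u := by
  subst hw; rw [coth, Real.cosh_sub]; field_simp; ring

lemma sinh_one_split (b : ℝ) :
    Real.sinh 1 = Real.sinh b * Real.cosh (1 - b) + Real.cosh b * Real.sinh (1 - b) := by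
  have := Real.sinh_add b (1 - b)
  rw [show b + (1 - b) = (1:ℝ) by ring] at this
  linarith [this]

lemma cosh_tanh (a : ℝ) : Real.cosh a * Real.tanh a = Real.sinh a := by
  rw [Real.tanh_eq_sinh_div_cosh]
  field_simp [Real.cosh_pos a |>.ne']

/-- left boundary column, diagonal row -/
lemma colL_diag (a c : ℝ) (hs1 : Real.sinh 1 ≠ 0) (h : Real.sinh (c - a) ≠ 0) :
    Real.cosh a * Real.cosh (1 - a) / Real.sinh 1 * (Real.tanh a + coth (c - a))
      + Real.cosh a * Real.cosh (1 - c) / Real.sinh 1 * (-(1 / Real.sinh (c - a))) = 1 := by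
  have e1 := brk2 (1 - a) (c - a) (1 - c) (by ring) h
  have e2 := cosh_tanh a
  have e3 := sinh_one_split a
  have e4 : Real.sinh 1 * (Real.sinh 1)⁻¹ = 1 := mul_inv_cancel₀ hs1
  linear_combination (Real.sinh 1)⁻¹ * Real.cosh a * e1
    + (Real.sinh 1)⁻¹ * Real.cosh (1 - a) * e2 - (Real.sinh 1)⁻¹ * e3 + e4

/-- left boundary column, off-diagonal row -/
lemma colL_off (a c s S1 : ℝ) (h : Real.sinh (c - a) ≠ 0) :
    Real.cosh a * Real.cosh (1 - s) / S1 * (Real.tanh a + coth (c - a))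
      + Real.cosh c * Real.cosh (1 - s) / S1 * (-(1 / Real.sinh (c - a))) = 0 := by
  have e1 := brk1 a (c - a) c (by ring) h
  have e2 := cosh_tanh a
  linear_combination (Real.cosh (1 - s) / S1) * e1 + (Real.cosh (1 - s) / S1) * e2

/-- right boundary column, diagonal row -/
lemma colR_diag (a b : ℝ) (hs1 : Real.sinh 1 ≠ 0) (h : Real.sinh (b - a) ≠ 0) :
    Real.cosh a * Real.cosh (1 - b) / Real.sinh 1 * (-(1 / Real.sinh (b - a)))
      + Real.cosh b * Real.cosh (1 - b) / Real.sinh 1 * (coth (b - a) + Real.tanh (1 - b)) = 1 := by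
  have e1 := brk2 b (b - a) a (by ring) h
  have e2 := cosh_tanh (1 - b)
  have e3 := sinh_one_split b
  have e4 : Real.sinh 1 * (Real.sinh 1)⁻¹ = 1 := mul_inv_cancel₀ hs1
  linear_combination (Real.sinh 1)⁻¹ * Real.cosh (1 - b) * e1
    + (Real.sinh 1)⁻¹ * Real.cosh b * e2 - (Real.sinh 1)⁻¹ * e3 + e4

/-- right boundary column, off-diagonal row -/
lemma colR_off (a b s S1 : ℝ) (h : Real.sinh (b - a) ≠ 0) :
    Real.cosh s * Real.cosh (1 - a) / S1 * (-(1 / Real.sinh (b - a)))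
      + Real.cosh s * Real.cosh (1 - b) / S1 * (coth (b - a) + Real.tanh (1 - b)) = 0 := by
  have e1 := brk1 (1 - b) (b - a) (1 - a) (by ring) h
  have e2 := cosh_tanh (1 - b)
  linear_combination (Real.cosh s / S1) * e1 + (Real.cosh s / S1) * e2

/-- interior column, diagonal row -/
lemma colM_diag (a b c : ℝ) (hs1 : Real.sinh 1 ≠ 0)
    (h1 : Real.sinh (b - a) ≠ 0) (h2 : Real.sinh (c - b) ≠ 0) :
    Real.cosh a * Real.cosh (1 - b) / Real.sinh 1 * (-(1 / Real.sinh (b - a)))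
      + Real.cosh b * Real.cosh (1 - b) / Real.sinh 1 * (coth (c - b) + coth (b - a))
      + Real.cosh b * Real.cosh (1 - c) / Real.sinh 1 * (-(1 / Real.sinh (c - b))) = 1 := by
  have e1 := brk2 b (b - a) a (by ring) h1
  have e2 := brk2 (1 - b) (c - b) (1 - c) (by ring) h2
  have e3 := sinh_one_split b
  have e4 : Real.sinh 1 * (Real.sinh 1)⁻¹ = 1 := mul_inv_cancel₀ hs1
  linear_combination (Real.sinh 1)⁻¹ * Real.cosh (1 - b) * e1
    + (Real.sinh 1)⁻¹ * Real.cosh b * e2 - (Real.sinh 1)⁻¹ * e3 + e4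

/-- interior column, row below diagonal -/
lemma colM_low (a b c s S1 : ℝ) (h1 : Real.sinh (b - a) ≠ 0) (h2 : Real.sinh (c - b) ≠ 0) :
    Real.cosh s * Real.cosh (1 - a) / S1 * (-(1 / Real.sinh (b - a)))
      + Real.cosh s * Real.cosh (1 - b) / S1 * (coth (c - b) + coth (b - a))
      + Real.cosh s * Real.cosh (1 - c) / S1 * (-(1 / Real.sinh (c - b))) = 0 := by
  have e1 := brk1 (1 - b) (b - a) (1 - a) (by ring) h1
  have e2 := brk2 (1 - b) (c - b) (1 - c) (by ring) h2
  linear_combination (Real.cosh s / S1) * e1 + (Real.cosh s / S1) * e2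

/-- interior column, row above diagonal -/
lemma colM_high (a b c s S1 : ℝ) (h1 : Real.sinh (b - a) ≠ 0) (h2 : Real.sinh (c - b) ≠ 0) :
    Real.cosh a * Real.cosh (1 - s) / S1 * (-(1 / Real.sinh (b - a)))
      + Real.cosh b * Real.cosh (1 - s) / S1 * (coth (c - b) + coth (b - a))
      + Real.cosh c * Real.cosh (1 - s) / S1 * (-(1 / Real.sinh (c - b))) = 0 := by
  have e1 := brk2 b (b - a) a (by ring) h1
  have e2 := brk1 b (c - b) c (by ring) h2
  linear_combination (Real.cosh (1 - s) / S1) * e1 + (Real.cosh (1 - s) / S1) * e2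

/-- The inverse of the Gram matrix of the Sobolev `H¹(0,1)` kernel
`K(x,y) = cosh(min(x,y)) cosh(1 − max(x,y)) / sinh 1` at ordered points
`0 ≤ x₁ < … < xₙ ≤ 1` is the explicit symmetric tridiagonal matrix `T` with
diagonal `tanh`/`coth` entries and off-diagonal entries `−1/sinh(xᵢ₊₁−xᵢ)`.
(Here points are indexed `x 0, …, x (n−1)`.) -/
theorem sobolev_gram_inverse_tridiagonal
    (n : ℕ) (hn : 2 ≤ n)
    (x : ℕ → ℝ)
    (hx0 : 0 ≤ x 0) (hx1 : x (n - 1) ≤ 1)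
    (hmono : ∀ i j : ℕ, i < j → j < n → x i < x j)
    (K : ℝ → ℝ → ℝ)
    (hK : ∀ s t, K s t =
      Real.cosh (min s t) * Real.cosh (1 - max s t) / Real.sinh 1)
    (G : Matrix (Fin n) (Fin n) ℝ)
    (hG : ∀ i j : Fin n, G i j = K (x i) (x j))
    (T : Matrix (Fin n) (Fin n) ℝ)
    (hT : ∀ i j : Fin n, T i j =
      if (i : ℕ) = (j : ℕ) then
        (if (i : ℕ) = 0 then Real.tanh (x 0) + coth (x 1 - x 0)
         else if (i : ℕ) = n - 1 then
           coth (x (n - 1) - x (n - 2)) + Real.tanh (1 - x (n - 1))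
         else coth (x ((i : ℕ) + 1) - x i) + coth (x i - x ((i : ℕ) - 1)))
      else if (j : ℕ) = (i : ℕ) + 1 then -(1 / Real.sinh (x j - x i))
      else if (i : ℕ) = (j : ℕ) + 1 then -(1 / Real.sinh (x i - x j))
      else 0) :
    IsUnit G.det ∧ G⁻¹ = T := by
  have hs1 : Real.sinh 1 ≠ 0 := (Real.sinh_pos_iff.2 one_pos).ne'
  have hsne : ∀ k l : ℕ, k < l → l < n → Real.sinh (x l - x k) ≠ 0 := fun k l h hl =>
    (Real.sinh_pos_iff.2 (by linarith [hmono k l h hl])).ne'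
  have hxle : ∀ i k : Fin n, (i : ℕ) ≤ (k : ℕ) → x i ≤ x k := by
    intro i k h
    rcases eq_or_lt_of_le h with h' | h'
    · rw [Fin.ext h']
    · exact (hmono i k h' k.isLt).le
  have hGlow : ∀ i k : Fin n, (i : ℕ) ≤ (k : ℕ) →
      G i k = Real.cosh (x i) * Real.cosh (1 - x k) / Real.sinh 1 := by
    intro i k h
    rw [hG, hK, min_eq_left (hxle i k h), max_eq_right (hxle i k h)]
  have hGhigh : ∀ i k : Fin n, (k : ℕ) ≤ (i : ℕ) →
      G i k = Real.cosh (x k) * Real.cosh (1 - x i) / Real.sinh 1 := by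
    intro i k h
    rw [hG, hK, min_eq_right (hxle k i h), max_eq_left (hxle k i h)]
  have hGT : G * T = 1 := by
    ext i j
    rw [Matrix.mul_apply, Matrix.one_apply]
    by_cases hj0 : (j : ℕ) = 0
    · -- left boundary column
      set j1 : Fin n := ⟨1, by omega⟩ with hj1def
      have hj1 : (j1 : ℕ) = 1 := rfl
      have hne : j ≠ j1 := Fin.ne_of_val_ne (by omega)
      have hzero : ∀ k ∈ Finset.univ, k ∉ ({j, j1} : Finset (Fin n)) → G i k * T k j = 0 := by
        intro k _ hk
        simp only [Finset.mem_insert, Finset.mem_singleton, not_or] at hk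
        have h1 : (k : ℕ) ≠ (j : ℕ) := fun h => hk.1 (Fin.ext h)
        have h2 : (k : ℕ) ≠ 1 := fun h => hk.2 (Fin.ext (by omega))
        rw [hT, if_neg h1, if_neg (by omega), if_neg (by omega), mul_zero]
      rw [← Finset.sum_subset (Finset.subset_univ ({j, j1} : Finset (Fin n))) hzero,
        Finset.sum_insert (by simpa using hne), Finset.sum_singleton]
      have hTjj : T j j = Real.tanh (x 0) + coth (x 1 - x 0) := by
        rw [hT, if_pos rfl, if_pos hj0]
      have hTj1 : T j1 j = -(1 / Real.sinh (x j1 - x j)) := by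
        rw [hT, if_neg (by omega), if_neg (by omega), if_pos (by omega)]
      have hxj : x (j : ℕ) = x 0 := by rw [hj0]
      have hxj1 : x (j1 : ℕ) = x 1 := by rw [hj1]
      by_cases hij : i = j
      · subst hij
        rw [if_pos rfl, hTjj, hTj1, hGlow i i le_rfl, hGlow i j1 (by omega), hxj, hxj1]
        exact colL_diag (x 0) (x 1) hs1 (hsne 0 1 one_pos (by omega))
      · rw [if_neg hij, hTjj, hTj1]
        have hi1 : 1 ≤ (i : ℕ) := by
          have : (i : ℕ) ≠ (j : ℕ) := fun h => hij (Fin.ext h); omega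
        rw [hGhigh i j (by omega), hGhigh i j1 (by omega), hxj, hxj1]
        exact colL_off (x 0) (x 1) (x i) (Real.sinh 1) (hsne 0 1 one_pos (by omega))
    · by_cases hjn : (j : ℕ) = n - 1
      · -- right boundary column
        set jm : Fin n := ⟨n - 2, by omega⟩ with hjmdef
        have hjm : (jm : ℕ) = n - 2 := rfl
        have hne : jm ≠ j := Fin.ne_of_val_ne (by omega)
        have hzero : ∀ k ∈ Finset.univ, k ∉ ({jm, j} : Finset (Fin n)) → G i k * T k j = 0 := by
          intro k _ hk
          simp only [Finset.mem_insert, Finset.mem_singleton, not_or] at hk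
          have h1 : (k : ℕ) ≠ (j : ℕ) := fun h => hk.2 (Fin.ext h)
          have h2 : (k : ℕ) ≠ n - 2 := fun h => hk.1 (Fin.ext (by omega))
          have h3 : (k : ℕ) < n := k.isLt
          rw [hT, if_neg h1, if_neg (by omega), if_neg (by omega), mul_zero]
        rw [← Finset.sum_subset (Finset.subset_univ ({jm, j} : Finset (Fin n))) hzero,
          Finset.sum_insert (by simpa using hne), Finset.sum_singleton]
        have hTjj : T j j = coth (x (n - 1) - x (n - 2)) + Real.tanh (1 - x (n - 1)) := by
          rw [hT, if_pos rfl, if_neg (by omega), if_pos hjn]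
        have hTjm : T jm j = -(1 / Real.sinh (x j - x jm)) := by
          rw [hT, if_neg (by omega), if_pos (by omega)]
        have hxj : x (j : ℕ) = x (n - 1) := by rw [hjn]
        have hxjm : x (jm : ℕ) = x (n - 2) := by rw [hjm]
        by_cases hij : i = j
        · subst hij
          rw [if_pos rfl, hTjj, hTjm, hGhigh i jm (by omega), hGlow i i le_rfl, hxj, hxjm]
          exact colR_diag (x (n - 2)) (x (n - 1)) hs1 (hsne (n - 2) (n - 1) (by omega) (by omega))
        · rw [if_neg hij, hTjj, hTjm]
          have hile : (i : ℕ) ≤ n - 2 := by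
            have : (i : ℕ) ≠ (j : ℕ) := fun h => hij (Fin.ext h)
            have := i.isLt; omega
          rw [hGlow i jm (by omega), hGlow i j (by omega), hxj, hxjm]
          exact colR_off (x (n - 2)) (x (n - 1)) (x i) (Real.sinh 1)
            (hsne (n - 2) (n - 1) (by omega) (by omega))
      · -- interior column
        have hjrange : 1 ≤ (j : ℕ) ∧ (j : ℕ) ≤ n - 2 := by have := j.isLt; omega
        set jm : Fin n := ⟨(j : ℕ) - 1, by omega⟩ with hjmdef
        set jp : Fin n := ⟨(j : ℕ) + 1, by omega⟩ with hjpdef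
        have hjm : (jm : ℕ) = (j : ℕ) - 1 := rfl
        have hjp : (jp : ℕ) = (j : ℕ) + 1 := rfl
        have hne1 : jm ≠ j := Fin.ne_of_val_ne (by omega)
        have hne2 : jm ≠ jp := Fin.ne_of_val_ne (by omega)
        have hne3 : j ≠ jp := Fin.ne_of_val_ne (by omega)
        have hzero : ∀ k ∈ Finset.univ, k ∉ ({jm, j, jp} : Finset (Fin n)) →
            G i k * T k j = 0 := by
          intro k _ hk
          simp only [Finset.mem_insert, Finset.mem_singleton, not_or] at hk
          have h1 : (k : ℕ) ≠ (j : ℕ) := fun h => hk.2.1 (Fin.ext h)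
          have h2 : (k : ℕ) ≠ (j : ℕ) - 1 := fun h => hk.1 (Fin.ext (by omega))
          have h3 : (k : ℕ) ≠ (j : ℕ) + 1 := fun h => hk.2.2 (Fin.ext (by omega))
          rw [hT, if_neg h1, if_neg (by omega), if_neg (by omega), mul_zero]
        rw [← Finset.sum_subset (Finset.subset_univ ({jm, j, jp} : Finset (Fin n))) hzero,
          Finset.sum_insert (by simp [hne1, hne2]), Finset.sum_insert (by simpa using hne3),
          Finset.sum_singleton]
        have hTjj : T j j = coth (x ((j : ℕ) + 1) - x j) + coth (x j - x ((j : ℕ) - 1)) := by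
          rw [hT, if_pos rfl, if_neg (by omega), if_neg (by omega)]
        have hTjm : T jm j = -(1 / Real.sinh (x j - x jm)) := by
          rw [hT, if_neg (by omega), if_pos (by omega)]
        have hTjp : T jp j = -(1 / Real.sinh (x jp - x j)) := by
          rw [hT, if_neg (by omega), if_neg (by omega), if_pos (by omega)]
        have hxjm : x (jm : ℕ) = x ((j : ℕ) - 1) := by rw [hjm]
        have hxjp : x (jp : ℕ) = x ((j : ℕ) + 1) := by rw [hjp]
        have hs1' := hsne ((j : ℕ) - 1) (j : ℕ) (by omega) j.isLt
        have hs2' := hsne (j : ℕ) ((j : ℕ) + 1) (by omega) (by omega)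
        rcases lt_trichotomy (i : ℕ) (j : ℕ) with hlt | heq | hgt
        · rw [if_neg (Fin.ne_of_val_ne (by omega)), hTjj, hTjm, hTjp,
            hGlow i jm (by omega), hGlow i j (by omega), hGlow i jp (by omega), hxjm, hxjp]
          linear_combination colM_low (x ((j : ℕ) - 1)) (x j) (x ((j : ℕ) + 1)) (x i)
            (Real.sinh 1) hs1' hs2'
        · rw [if_pos (Fin.ext heq), hTjj, hTjm, hTjp, hGhigh i jm (by omega),
            hGlow i j (by omega), hGlow i jp (by omega), hxjm, hxjp]
          have hxi : x (i : ℕ) = x (j : ℕ) := by rw [heq]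
          rw [hxi]
          linear_combination colM_diag (x ((j : ℕ) - 1)) (x j) (x ((j : ℕ) + 1)) hs1 hs1' hs2'
        · rw [if_neg (Fin.ne_of_val_ne (by omega)), hTjj, hTjm, hTjp,
            hGhigh i jm (by omega), hGhigh i j (by omega), hGhigh i jp (by omega), hxjm, hxjp]
          linear_combination colM_high (x ((j : ℕ) - 1)) (x j) (x ((j : ℕ) + 1)) (x i)
            (Real.sinh 1) hs1' hs2'
  exact ⟨Matrix.isUnit_det_of_right_inverse hGT, Matrix.inv_eq_right_inv hGT⟩
end

section
/- Let n ≥ 2, let 0 ≤ x₁ < x₂ < … < xₙ ≤ 1, let K(x,y) = cosh(min(x,y))·cosh(1−max(x,y))/sinh(1), and let G = (K(xᵢ,xⱼ))₁≤i,j≤n be the (invertible) Gram matrix. Set x₀ = −x₁ and x_{n+1} = 2 − xₙ. Then for every vector v ∈ ℝⁿ, vᵀ G⁻¹ v = Σ_{i=1}^{n} [ tanh((x_{i+1}−xᵢ)/2) + tanh((xᵢ−x_{i−1})/2) ]·vᵢ² + Σ_{i=2}^{n} (vᵢ − v_{i−1})² / sinh(xᵢ − x_{i−1}). -/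
noncomputable def myCoth (d : ℝ) : ℝ := Real.cosh d / Real.sinh d

noncomputable def mAux (n : ℕ) (x : ℕ → ℝ) (i j : ℕ) : ℝ :=
  if i = j then
    (if i = 1 then Real.tanh (x 1) else myCoth (x i - x (i - 1)))
      + (if i = n then Real.tanh (1 - x n) else myCoth (x (i + 1) - x i))
  else if i + 1 = j then -(1 / Real.sinh (x j - x i))
  else if j + 1 = i then -(1 / Real.sinh (x i - x j))
  else 0

lemma cosh_expand (u w : ℝ) :
    Real.cosh u = Real.cosh w * Real.cosh (u - w) + Real.sinh w * Real.sinh (u - w) := by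
  have h := Real.cosh_add w (u - w)
  rw [show w + (u - w) = u from by ring] at h
  exact h

lemma cosh_expand' (u w : ℝ) :
    Real.cosh u = Real.cosh w * Real.cosh (w - u) - Real.sinh w * Real.sinh (w - u) := by
  have h := Real.cosh_sub w (w - u)
  rw [show w - (w - u) = u from by ring] at h
  exact h

lemma sinh_expand (u w : ℝ) :
    Real.sinh u = Real.sinh w * Real.cosh (u - w) + Real.cosh w * Real.sinh (u - w) := by
  have h := Real.sinh_add w (u - w)
  rw [show w + (u - w) = u from by ring] at h
  exact h

lemma tridiag_sum (n : ℕ) (hn : 2 ≤ n) (x : ℕ → ℝ) (i : ℕ) (h1 : 1 ≤ i) (h2 : i ≤ n)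
    (f : ℕ → ℝ) :
    ∑ k ∈ Finset.Icc 1 n, mAux n x i k * f k
      = mAux n x i i * f i
        + (if i + 1 ≤ n then mAux n x i (i + 1) * f (i + 1) else 0)
        + (if 2 ≤ i then mAux n x i (i - 1) * f (i - 1) else 0) := by
  set S : Finset ℕ := Finset.Icc (max 1 (i - 1)) (min n (i + 1)) with hS
  have hsub : S ⊆ Finset.Icc 1 n := by
    intro k hk
    simp only [hS, Finset.mem_Icc] at hk ⊢
    omega
  have hzero : ∀ k ∈ Finset.Icc 1 n, k ∉ S → mAux n x i k * f k = 0 := by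
    intro k hk hks
    simp only [hS, Finset.mem_Icc] at hk hks
    have h1 : i ≠ k := by omega
    have h2 : i + 1 ≠ k := by omega
    have h3 : k + 1 ≠ i := by omega
    simp [mAux, h1, h2, h3]
  rw [← Finset.sum_subset hsub hzero]
  rcases eq_or_lt_of_le h1 with h1' | h1'
  · have hi : i = 1 := h1'.symm
    subst hi
    have : S = {1, 2} := by
      ext k
      simp only [hS, Finset.mem_Icc, Finset.mem_insert, Finset.mem_singleton]
      omega
    rw [this, Finset.sum_insert (by simp), Finset.sum_singleton,
      if_pos (by omega : 1 + 1 ≤ n), if_neg (by omega : ¬ 2 ≤ 1)]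
    ring
  · rcases eq_or_lt_of_le h2 with h2' | h2'
    · subst h2'
      have : S = {i - 1, i} := by
        ext k
        simp only [hS, Finset.mem_Icc, Finset.mem_insert, Finset.mem_singleton]
        omega
      rw [this, Finset.sum_insert (by simp only [Finset.mem_insert, Finset.mem_singleton]; omega),
        Finset.sum_singleton,
        if_neg (by omega : ¬ i + 1 ≤ i), if_pos (by omega : 2 ≤ i)]
      ring
    · have : S = {i - 1, i, i + 1} := by
        ext k
        simp only [hS, Finset.mem_Icc, Finset.mem_insert, Finset.mem_singleton]
        omega
      rw [this, Finset.sum_insert (by simp only [Finset.mem_insert, Finset.mem_singleton]; omega),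
        Finset.sum_insert (by simp only [Finset.mem_insert, Finset.mem_singleton]; omega),
        Finset.sum_singleton,
        if_pos (by omega : i + 1 ≤ n), if_pos (by omega : 2 ≤ i)]
      ring

set_option maxHeartbeats 1000000 in
lemma rowK (n : ℕ) (hn : 2 ≤ n) (x : ℕ → ℝ)
    (hmono : ∀ i j : ℕ, 1 ≤ i → i < j → j ≤ n → x i < x j)
    (K : ℝ → ℝ → ℝ)
    (hK : ∀ s t, K s t = Real.cosh (min s t) * Real.cosh (1 - max s t) / Real.sinh 1)
    (i j : ℕ) (hi1 : 1 ≤ i) (hin : i ≤ n) (hj1 : 1 ≤ j) (hjn : j ≤ n) :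
    ∑ k ∈ Finset.Icc 1 n, mAux n x i k * K (x k) (x j) = if i = j then 1 else 0 := by
  have hle : ∀ a b : ℕ, 1 ≤ a → a ≤ b → b ≤ n → x a ≤ x b := by
    intro a b ha hab hbn
    rcases eq_or_lt_of_le hab with rfl | h
    · exact le_refl _
    · exact (hmono a b ha h hbn).le
  have hs1 : Real.sinh 1 ≠ 0 := ne_of_gt (Real.sinh_pos_iff.2 one_pos)
  have hΔ' : i + 1 ≤ n → Real.sinh (x (i+1) - x i) ≠ 0 := fun h => ne_of_gt
    (Real.sinh_pos_iff.2 (by have := hmono i (i+1) hi1 (by omega) h; linarith))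
  have hΔ : 2 ≤ i → Real.sinh (x i - x (i-1)) ≠ 0 := fun h => ne_of_gt
    (Real.sinh_pos_iff.2 (by have := hmono (i-1) i (by omega) (by omega) hin; linarith))
  rw [tridiag_sum n hn x i hi1 hin (fun k => K (x k) (x j))]
  have m_up : mAux n x i (i+1) = -(1 / Real.sinh (x (i+1) - x i)) := by
    unfold mAux; rw [if_neg (by omega), if_pos rfl]
  have m_low : 2 ≤ i → mAux n x i (i-1) = -(1 / Real.sinh (x i - x (i-1))) := by
    intro h
    unfold mAux
    rw [if_neg (by omega), if_neg (by omega), if_pos (by omega)]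
  have m_diag : mAux n x i i =
      (if i = 1 then Real.tanh (x 1) else myCoth (x i - x (i - 1)))
        + (if i = n then Real.tanh (1 - x n) else myCoth (x (i + 1) - x i)) := by
    unfold mAux; rw [if_pos rfl]
  rcases lt_trichotomy i j with hij | rfl | hij
  · -- i < j
    rw [if_neg (by omega : ¬ i = j), if_pos (by omega : i + 1 ≤ n)]
    have o1 : x i ≤ x j := hle i j hi1 hij.le hjn
    have o2 : x (i+1) ≤ x j := hle (i+1) j (by omega) (by omega) hjn
    by_cases h2 : 2 ≤ i
    · rw [if_pos h2, m_up, m_low h2, m_diag, if_neg (by omega : ¬ i = 1),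
        if_neg (by omega : ¬ i = n)]
      have o3 : x (i-1) ≤ x j := hle (i-1) j (by omega) (by omega) hjn
      rw [hK (x i) (x j), hK (x (i+1)) (x j), hK (x (i-1)) (x j),
        min_eq_left o1, max_eq_right o1, min_eq_left o2, max_eq_right o2,
        min_eq_left o3, max_eq_right o3]
      have hA := cosh_expand (x (i+1)) (x i)
      have hB := cosh_expand' (x (i-1)) (x i)
      rw [hA, hB]
      unfold myCoth
      have h' := hΔ' (by omega : i + 1 ≤ n)
      have h'' := hΔ h2
      field_simp [hs1, h', h'']
      ring
    · have hi : i = 1 := by omega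
      subst hi
      rw [if_neg h2, m_up, m_diag, if_pos rfl, if_neg (by omega : ¬ 1 = n)]
      rw [hK (x 1) (x j), hK (x (1+1)) (x j),
        min_eq_left o1, max_eq_right o1, min_eq_left o2, max_eq_right o2]
      have hA := cosh_expand (x (1+1)) (x 1)
      rw [hA, Real.tanh_eq_sinh_div_cosh]
      unfold myCoth
      have hc : Real.cosh (x 1) ≠ 0 := (Real.cosh_pos (x 1)).ne'
      have h' := hΔ' (by omega : 1 + 1 ≤ n)
      field_simp [hs1, hc, h']
      ring
  · -- i = j : diagonal
    rw [if_pos rfl]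
    have hE := sinh_expand 1 (x i)
    have hden : Real.sinh (x i) * Real.cosh (1 - x i) + Real.cosh (x i) * Real.sinh (1 - x i) ≠ 0 :=
      hE ▸ hs1
    rw [hK (x i) (x i), min_self, max_self]
    rcases eq_or_lt_of_le hi1 with h1' | h1'
    · -- i = 1
      have hi : i = 1 := h1'.symm
      subst hi
      rw [if_pos (by omega : 1 + 1 ≤ n), if_neg (by omega : ¬ 2 ≤ 1),
        m_up, m_diag, if_pos rfl, if_neg (by omega : ¬ 1 = n)]
      have o2 : x 1 ≤ x (1+1) := hle 1 (1+1) (by omega) (by omega) (by omega)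
      rw [hK (x (1+1)) (x 1), min_eq_right o2, max_eq_left o2]
      have hD := cosh_expand' (1 - x (1+1)) (1 - x 1)
      rw [show (1 - x 1) - (1 - x (1+1)) = x (1+1) - x 1 from by ring] at hD
      rw [hD, Real.tanh_eq_sinh_div_cosh, hE]
      unfold myCoth
      have hc : Real.cosh (x 1) ≠ 0 := (Real.cosh_pos (x 1)).ne'
      have h' := hΔ' (by omega : 1 + 1 ≤ n)
      field_simp [hden, hc, h']
      ring
    · rcases eq_or_lt_of_le hin with h2' | h2'
      · -- i = n
        subst h2'
        rw [if_neg (by omega : ¬ i + 1 ≤ i), if_pos (by omega : 2 ≤ i),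
          m_low (by omega), m_diag, if_neg (by omega : ¬ i = 1), if_pos rfl]
        have o3 : x (i-1) ≤ x i := hle (i-1) i (by omega) (by omega) (by omega)
        rw [hK (x (i-1)) (x i), min_eq_left o3, max_eq_right o3]
        have hB := cosh_expand' (x (i-1)) (x i)
        rw [hB, Real.tanh_eq_sinh_div_cosh, hE]
        unfold myCoth
        have hc : Real.cosh (1 - x i) ≠ 0 := (Real.cosh_pos (1 - x i)).ne'
        have h' := hΔ (by omega)
        field_simp [hden, hc, h']
        have hden2 := hden
        ring_nf at hden2 ⊢
        field_simp [hden2]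
      · -- interior
        rw [if_pos (by omega : i + 1 ≤ n), if_pos (by omega : 2 ≤ i),
          m_up, m_low (by omega), m_diag, if_neg (by omega : ¬ i = 1),
          if_neg (by omega : ¬ i = n)]
        have o2 : x i ≤ x (i+1) := hle i (i+1) (by omega) (by omega) (by omega)
        have o3 : x (i-1) ≤ x i := hle (i-1) i (by omega) (by omega) (by omega)
        rw [hK (x (i+1)) (x i), min_eq_right o2, max_eq_left o2,
          hK (x (i-1)) (x i), min_eq_left o3, max_eq_right o3]
        have hB := cosh_expand' (x (i-1)) (x i)
        have hD := cosh_expand' (1 - x (i+1)) (1 - x i)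
        rw [show (1 - x i) - (1 - x (i+1)) = x (i+1) - x i from by ring] at hD
        rw [hB, hD, hE]
        unfold myCoth
        have h' := hΔ' (by omega)
        have h'' := hΔ (by omega)
        field_simp [hden, h', h'']
        have hden2 := hden
        ring_nf at hden2 ⊢
        field_simp [hden2]
  · -- j < i
    rw [if_neg (by omega : ¬ i = j), if_pos (by omega : 2 ≤ i), m_low (by omega), m_diag,
      if_neg (by omega : ¬ i = 1)]
    have o1 : x j ≤ x i := hle j i hj1 hij.le hin
    have o3 : x j ≤ x (i-1) := hle j (i-1) hj1 (by omega) (by omega)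
    rcases eq_or_lt_of_le hin with h2' | h2'
    · -- i = n
      subst h2'
      rw [if_neg (by omega : ¬ i + 1 ≤ i), if_pos rfl]
      rw [hK (x i) (x j), hK (x (i-1)) (x j),
        min_eq_right o1, max_eq_left o1, min_eq_right o3, max_eq_left o3]
      have hC := cosh_expand (1 - x (i-1)) (1 - x i)
      rw [show (1 - x (i-1)) - (1 - x i) = x i - x (i-1) from by ring] at hC
      rw [hC, Real.tanh_eq_sinh_div_cosh]
      unfold myCoth
      have hc : Real.cosh (1 - x i) ≠ 0 := (Real.cosh_pos (1 - x i)).ne'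
      have h'' := hΔ (by omega)
      field_simp [hs1, hc, h'']
      ring
    · -- interior
      rw [if_pos (by omega : i + 1 ≤ n), if_neg (by omega : ¬ i = n), m_up]
      have o2 : x j ≤ x (i+1) := hle j (i+1) hj1 (by omega) (by omega)
      rw [hK (x i) (x j), hK (x (i+1)) (x j), hK (x (i-1)) (x j),
        min_eq_right o1, max_eq_left o1, min_eq_right o2, max_eq_left o2,
        min_eq_right o3, max_eq_left o3]
      have hC := cosh_expand (1 - x (i-1)) (1 - x i)
      rw [show (1 - x (i-1)) - (1 - x i) = x i - x (i-1) from by ring] at hC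
      have hD := cosh_expand' (1 - x (i+1)) (1 - x i)
      rw [show (1 - x i) - (1 - x (i+1)) = x (i+1) - x i from by ring] at hD
      rw [hC, hD]
      unfold myCoth
      have h' := hΔ' (by omega)
      have h'' := hΔ (by omega)
      field_simp [hs1, h', h'']
      ring

lemma coth_eq_tanh_half (d : ℝ) (hd : 0 < d) :
    myCoth d = Real.tanh (d / 2) + 1 / Real.sinh d := by
  have hs2 := Real.sinh_two_mul (d / 2)
  have hc2 := Real.cosh_two_mul (d / 2)
  rw [show 2 * (d / 2) = d by ring] at hs2 hc2
  have hpy := Real.cosh_sq_sub_sinh_sq (d / 2)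
  have hsne : Real.sinh (d / 2) ≠ 0 := ne_of_gt (Real.sinh_pos_iff.2 (by linarith))
  have hcne : Real.cosh (d / 2) ≠ 0 := ne_of_gt (Real.cosh_pos _)
  have hdne : Real.sinh d ≠ 0 := ne_of_gt (Real.sinh_pos_iff.2 hd)
  rw [Real.tanh_eq_sinh_div_cosh]
  unfold myCoth
  rw [hs2, hc2]
  field_simp
  linear_combination hpy


lemma fin_sum_shift (n : ℕ) (f : ℕ → ℝ) :
    ∑ k : Fin n, f ((k : ℕ) + 1) = ∑ k ∈ Finset.Icc 1 n, f k := by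
  rw [Fin.sum_univ_eq_sum_range (fun k => f (k + 1)) n, ← Finset.Ico_add_one_right_eq_Icc,
    Finset.sum_Ico_eq_sum_range]
  simp [add_comm]

lemma quad_sum (n : ℕ) (hn : 2 ≤ n) (x : ℕ → ℝ)
    (hmono : ∀ i j : ℕ, 1 ≤ i → i < j → j ≤ n → x i < x j)
    (hxleft : x 0 = -x 1) (hxright : x (n + 1) = 2 - x n) (v : ℕ → ℝ) :
    ∑ i ∈ Finset.Icc 1 n, v i * (∑ k ∈ Finset.Icc 1 n, mAux n x i k * v k)
      = (∑ i ∈ Finset.Icc 1 n,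
          (Real.tanh ((x (i + 1) - x i) / 2) + Real.tanh ((x i - x (i - 1)) / 2)) * v i ^ 2)
        + ∑ i ∈ Finset.Icc 2 n, (v i - v (i - 1)) ^ 2 / Real.sinh (x i - x (i - 1)) := by
  have hstep : ∀ i ∈ Finset.Icc 1 n,
      v i * (∑ k ∈ Finset.Icc 1 n, mAux n x i k * v k)
        = (Real.tanh ((x (i + 1) - x i) / 2) + Real.tanh ((x i - x (i - 1)) / 2)) * v i ^ 2
          + ((if 2 ≤ i then (v i ^ 2 - v i * v (i - 1)) / Real.sinh (x i - x (i - 1)) else 0)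
          + (if i + 1 ≤ n then (v i ^ 2 - v i * v (i + 1)) / Real.sinh (x (i + 1) - x i) else 0)) := by
    intro i hi
    simp only [Finset.mem_Icc] at hi
    rw [tridiag_sum n hn x i hi.1 hi.2 v]
    have m_up : mAux n x i (i+1) = -(1 / Real.sinh (x (i+1) - x i)) := by
      unfold mAux; rw [if_neg (by omega), if_pos rfl]
    have m_low : 2 ≤ i → mAux n x i (i-1) = -(1 / Real.sinh (x i - x (i-1))) := by
      intro h
      unfold mAux
      rw [if_neg (by omega), if_neg (by omega), if_pos (by omega)]
    have m_diag : mAux n x i i =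
        (if i = 1 then Real.tanh (x 1) else myCoth (x i - x (i - 1)))
          + (if i = n then Real.tanh (1 - x n) else myCoth (x (i + 1) - x i)) := by
      unfold mAux; rw [if_pos rfl]
    rw [m_diag, m_up]
    rcases eq_or_lt_of_le hi.1 with h1' | h1'
    · -- i = 1
      have hi1 : i = 1 := h1'.symm
      subst hi1
      rw [if_pos rfl, if_neg (by omega : ¬ (1:ℕ) = n), if_neg (by omega : ¬ 2 ≤ 1),
        if_neg (by omega : ¬ 2 ≤ 1), if_pos (by omega : 1 + 1 ≤ n),
        if_pos (by omega : 1 + 1 ≤ n)]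
      rw [coth_eq_tanh_half _ (by
        have := hmono 1 (1+1) (by omega) (by omega) (by omega); linarith)]
      rw [show (x 1 - x (1 - 1)) / 2 = x 1 from by
        rw [show (1:ℕ) - 1 = 0 from rfl, hxleft]; ring]
      ring
    · rcases eq_or_lt_of_le hi.2 with h2' | h2'
      · -- i = n
        subst h2'
        rw [if_neg (by omega : ¬ i = 1), if_pos rfl, if_pos (by omega : 2 ≤ i),
          if_pos (by omega : 2 ≤ i), if_neg (by omega : ¬ i + 1 ≤ i),
          if_neg (by omega : ¬ i + 1 ≤ i), m_low (by omega)]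
        rw [coth_eq_tanh_half _ (by
          have := hmono (i-1) i (by omega) (by omega) (by omega); linarith)]
        rw [show (x (i + 1) - x i) / 2 = 1 - x i from by rw [hxright]; ring]
        ring
      · -- interior
        rw [if_neg (by omega : ¬ i = 1), if_neg (by omega : ¬ i = n),
          if_pos (by omega : 2 ≤ i), if_pos (by omega : 2 ≤ i),
          if_pos (by omega : i + 1 ≤ n), if_pos (by omega : i + 1 ≤ n),
          m_low (by omega)]
        rw [coth_eq_tanh_half (x i - x (i-1)) (by
          have := hmono (i-1) i (by omega) (by omega) (by omega); linarith)]
        rw [coth_eq_tanh_half (x (i+1) - x i) (by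
          have := hmono i (i+1) (by omega) (by omega) (by omega); linarith)]
        ring
  rw [Finset.sum_congr rfl hstep, Finset.sum_add_distrib, Finset.sum_add_distrib]
  congr 1
  -- remaining: sum of the two indicator sums equals the difference-quotient sum
  have e1 : (∑ i ∈ Finset.Icc 1 n,
      (if 2 ≤ i then (v i ^ 2 - v i * v (i - 1)) / Real.sinh (x i - x (i - 1)) else 0))
      = ∑ i ∈ Finset.Icc 2 n, (v i ^ 2 - v i * v (i - 1)) / Real.sinh (x i - x (i - 1)) := by
    have hsub : Finset.Icc 2 n ⊆ Finset.Icc 1 n := by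
      intro k hk; simp only [Finset.mem_Icc] at hk ⊢; omega
    have hzero : ∀ k ∈ Finset.Icc 1 n, k ∉ Finset.Icc 2 n →
        (if 2 ≤ k then (v k ^ 2 - v k * v (k - 1)) / Real.sinh (x k - x (k - 1)) else 0) = 0 := by
      intro k hk hnk
      simp only [Finset.mem_Icc] at hk hnk
      exact if_neg (by omega)
    rw [← Finset.sum_subset hsub hzero]
    exact Finset.sum_congr rfl (fun k hk => by
      simp only [Finset.mem_Icc] at hk
      rw [if_pos (by omega)])
  have e2 : (∑ i ∈ Finset.Icc 1 n,
      (if i + 1 ≤ n then (v i ^ 2 - v i * v (i + 1)) / Real.sinh (x (i + 1) - x i) else 0))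
      = ∑ i ∈ Finset.Icc 2 n, (v (i-1) ^ 2 - v (i-1) * v i) / Real.sinh (x i - x (i - 1)) := by
    have h1 : (∑ i ∈ Finset.Icc 1 n,
        (if i + 1 ≤ n then (v i ^ 2 - v i * v (i + 1)) / Real.sinh (x (i + 1) - x i) else 0))
        = ∑ i ∈ Finset.Icc 1 (n-1), (v i ^ 2 - v i * v (i + 1)) / Real.sinh (x (i + 1) - x i) := by
      have hsub : Finset.Icc 1 (n-1) ⊆ Finset.Icc 1 n := by
        intro k hk; simp only [Finset.mem_Icc] at hk ⊢; omega
      have hzero : ∀ k ∈ Finset.Icc 1 n, k ∉ Finset.Icc 1 (n-1) →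
          (if k + 1 ≤ n then (v k ^ 2 - v k * v (k + 1)) / Real.sinh (x (k + 1) - x k) else 0) = 0 := by
        intro k hk hnk
        simp only [Finset.mem_Icc] at hk hnk
        exact if_neg (by omega)
      rw [← Finset.sum_subset hsub hzero]
      exact Finset.sum_congr rfl (fun k hk => by
        simp only [Finset.mem_Icc] at hk
        rw [if_pos (by omega)])
    rw [h1]
    have h2 : Finset.Icc 2 n = (Finset.Icc 1 (n-1)).map (addRightEmbedding 1) := by
      rw [Finset.map_add_right_Icc]
      congr 1
      omega
    rw [h2, Finset.sum_map]
    refine Finset.sum_congr rfl (fun k hk => ?_)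
    simp only [Finset.mem_Icc] at hk
    simp only [addRightEmbedding_apply]
    rw [show k + 1 - 1 = k from by omega]
  rw [e1, e2, ← Finset.sum_add_distrib]
  refine Finset.sum_congr rfl (fun k hk => ?_)
  rw [← add_div]
  congr 1
  ring


/-- Explicit quadratic form of the inverse Gram matrix of the Sobolev `H¹(0,1)`
kernel at ordered points `0 ≤ x₁ < … < xₙ ≤ 1` (with the conventions
`x₀ = −x₁`, `x_{n+1} = 2 − xₙ`):
`vᵀG⁻¹v = Σᵢ [tanh((xᵢ₊₁−xᵢ)/2) + tanh((xᵢ−xᵢ₋₁)/2)]vᵢ²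
        + Σᵢ (vᵢ−vᵢ₋₁)²/sinh(xᵢ−xᵢ₋₁)`. -/
theorem sobolev_gram_inverse_quadratic_form
    (n : ℕ) (hn : 2 ≤ n)
    (x : ℕ → ℝ)
    (hx0 : 0 ≤ x 1) (hx1 : x n ≤ 1)
    (hmono : ∀ i j : ℕ, 1 ≤ i → i < j → j ≤ n → x i < x j)
    (hxleft : x 0 = -x 1) (hxright : x (n + 1) = 2 - x n)
    (K : ℝ → ℝ → ℝ)
    (hK : ∀ s t, K s t =
      Real.cosh (min s t) * Real.cosh (1 - max s t) / Real.sinh 1)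
    (G : Matrix (Fin n) (Fin n) ℝ)
    (hG : ∀ i j : Fin n, G i j = K (x ((i : ℕ) + 1)) (x ((j : ℕ) + 1)))
    (hGinv : IsUnit G.det) :
    ∀ v : ℕ → ℝ,
      dotProduct (fun i : Fin n => v ((i : ℕ) + 1))
          ((G⁻¹).mulVec (fun i : Fin n => v ((i : ℕ) + 1)))
        = (∑ i ∈ Finset.Icc 1 n,
            (Real.tanh ((x (i + 1) - x i) / 2)
              + Real.tanh ((x i - x (i - 1)) / 2)) * v i ^ 2)
          + ∑ i ∈ Finset.Icc 2 n,
              (v i - v (i - 1)) ^ 2 / Real.sinh (x i - x (i - 1)) := by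
  intro v
  have hPG : (Matrix.of fun i j : Fin n => mAux n x ((i : ℕ) + 1) ((j : ℕ) + 1)) * G = 1 := by
    ext i j
    rw [Matrix.mul_apply]
    have hshift := fin_sum_shift n
      (fun k => mAux n x ((i : ℕ) + 1) k * K (x k) (x ((j : ℕ) + 1)))
    simp only [Matrix.of_apply, hG]
    rw [hshift, rowK n hn x hmono K hK ((i : ℕ) + 1) ((j : ℕ) + 1)
      (by omega) (Nat.succ_le_of_lt i.isLt) (by omega) (Nat.succ_le_of_lt j.isLt),
      Matrix.one_apply]
    by_cases h : i = j
    · simp [h]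
    · rw [if_neg (fun hc => h (Fin.ext (by omega))), if_neg h]
  rw [Matrix.inv_eq_left_inv hPG]
  have hinner : ∀ I : ℕ,
      (∑ k : Fin n, mAux n x I ((k : ℕ) + 1) * v ((k : ℕ) + 1))
        = ∑ k ∈ Finset.Icc 1 n, mAux n x I k * v k :=
    fun I => fin_sum_shift n (fun k => mAux n x I k * v k)
  simp only [dotProduct, Matrix.mulVec, Matrix.of_apply]
  simp only [hinner]
  rw [fin_sum_shift n (fun I => v I * ∑ k ∈ Finset.Icc 1 n, mAux n x I k * v k)]
  exact quad_sum n hn x hmono hxleft hxright v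
end

section
/- Let f : [0,1] → ℝ be continuously differentiable and let c_ℓ = ∫₀¹ f(x)·φ_ℓ(x) dx for ℓ ∈ ℕ. Then ∫₀¹ f(x)² dx + ∫₀¹ f′(x)² dx = Σ_{ℓ=0}^{∞} (1 + λ_ℓ)·c_ℓ², where λ_ℓ = π²ℓ² (in particular the series on the right converges). -/
open MeasureTheory Complex Real Set AddCircle intervalIntegral
open scoped ENNReal

local instance factP : Fact (0 < (2:ℝ)) := ⟨by norm_num⟩




lemma ae_ne_one : ∀ᵐ x : ℝ ∂volume, x ≠ 1 := by
  rw [MeasureTheory.ae_iff]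
  simpa using Real.volume_singleton (a := 1)

lemma parseval2 (F : ℝ → ℂ)
    (hG : MemLp (AddCircle.liftIco (2:ℝ) (-1) F) 2 haarAddCircle) :
    HasSum (fun n : ℤ =>
      ‖(1 / (2:ℝ)) • ∫ x in (-1:ℝ)..1, (fourier (-n) (x : AddCircle (2:ℝ))) • F x‖ ^ 2)
      ((1 / 2) * ∫ x in (-1:ℝ)..1, ‖F x‖ ^ 2) := by
  set G := AddCircle.liftIco (2:ℝ) (-1) F with hGdef
  set g : Lp ℂ 2 (haarAddCircle (T := 2)) := hG.toLp G with hgdef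
  have hae : ⇑g =ᵐ[haarAddCircle] G := hG.coeFn_toLp
  have haeIoc : ∀ᵐ x : ℝ ∂volume, x ∈ Set.uIoc (-1:ℝ) 1 → G ↑x = F x := by
    filter_upwards [ae_ne_one] with x hx hmem
    rw [Set.uIoc_of_le (by norm_num : (-1:ℝ) ≤ 1)] at hmem
    exact AddCircle.liftIco_coe_apply ⟨hmem.1.le, by norm_num [lt_of_le_of_ne hmem.2 hx]⟩
  have hcoeff : ∀ n : ℤ, fourierCoeff (⇑g) n
      = (1 / (2:ℝ)) • ∫ x in (-1:ℝ)..1, (fourier (-n) (x : AddCircle (2:ℝ))) • F x := by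
    intro n
    have h1 : fourierCoeff (⇑g) n = fourierCoeff G n := by
      unfold fourierCoeff
      exact integral_congr_ae (hae.mono fun x hx => by dsimp only; rw [hx])
    rw [h1, fourierCoeff_eq_intervalIntegral G n (-1)]
    have h2 : (-1:ℝ) + 2 = 1 := by norm_num
    rw [h2]
    congr 1
    refine intervalIntegral.integral_congr_ae ?_
    filter_upwards [haeIoc] with x hx hmem
    rw [hx hmem]
  have hsum : Summable fun i : ℤ => ‖fourierCoeff (⇑g) i‖ ^ 2 := by
    have h := (lp.memℓp (fourierBasis.repr g)).summable
      (by norm_num : 0 < (2:ℝ≥0∞).toReal)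
    refine h.congr fun i => ?_
    rw [fourierBasis_repr]
    rw [show ((2:ℝ≥0∞)).toReal = ((2:ℕ):ℝ) by norm_num, Real.rpow_natCast]
  have hval : (∫ t : AddCircle (2:ℝ), ‖(⇑g) t‖ ^ 2 ∂haarAddCircle)
      = (1 / 2) * ∫ x in (-1:ℝ)..1, ‖F x‖ ^ 2 := by
    have e1 : (∫ t : AddCircle (2:ℝ), ‖(⇑g) t‖ ^ 2 ∂haarAddCircle)
        = ∫ t : AddCircle (2:ℝ), ‖G t‖ ^ 2 ∂haarAddCircle :=
      integral_congr_ae (hae.mono fun x hx => by dsimp only; rw [hx])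
    have e2 : (∫ t : AddCircle (2:ℝ), ‖G t‖ ^ 2)
        = 2 * ∫ t : AddCircle (2:ℝ), ‖G t‖ ^ 2 ∂haarAddCircle := by
      rw [AddCircle.volume_eq_smul_haarAddCircle, MeasureTheory.integral_smul_measure]
      norm_num
    have e3 : (∫ x in (-1:ℝ)..(-1) + 2, ‖G ↑x‖ ^ 2) = ∫ t : AddCircle (2:ℝ), ‖G t‖ ^ 2 :=
      AddCircle.intervalIntegral_preimage (2:ℝ) (-1) (fun t => ‖G t‖ ^ 2)
    have e4 : (∫ x in (-1:ℝ)..(-1) + 2, ‖G ↑x‖ ^ 2) = ∫ x in (-1:ℝ)..1, ‖F x‖ ^ 2 := by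
      rw [show (-1:ℝ) + 2 = 1 by norm_num]
      refine intervalIntegral.integral_congr_ae ?_
      filter_upwards [haeIoc] with x hx hmem
      rw [hx hmem]
    rw [e1]
    rw [e4] at e3
    rw [← e3] at e2
    linarith
  have key := hsum.hasSum
  rw [tsum_sq_fourierCoeff g, hval] at key
  have heq : (fun n : ℤ => ‖(1 / (2:ℝ)) • ∫ x in (-1:ℝ)..1,
      (fourier (-n) (x : AddCircle (2:ℝ))) • F x‖ ^ 2)
      = fun n : ℤ => ‖fourierCoeff (⇑g) n‖ ^ 2 := by
    funext n; rw [hcoeff n]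
  rw [heq]
  exact key



local instance fact2' : Fact (0 < (2:ℝ)) := ⟨by norm_num⟩


lemma fourier_eval (n : ℤ) (x : ℝ) :
    (fourier (-n) ((x : ℝ) : AddCircle (2:ℝ)) : ℂ)
      = Complex.exp (-((π * n * x : ℝ) : ℂ) * Complex.I) := by
  rw [fourier_coe_apply]
  congr 1
  push_cast
  ring

lemma even_combine (θ : ℝ) :
    Complex.exp (-(θ:ℂ) * Complex.I) + Complex.exp ((θ:ℂ) * Complex.I)
      = 2 * ((Real.cos θ : ℝ) : ℂ) := by
  rw [Complex.exp_mul_I, Complex.exp_mul_I, Complex.cos_neg, Complex.sin_neg,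
    Complex.ofReal_cos]
  ring

lemma odd_combine (θ : ℝ) :
    Complex.exp (-(θ:ℂ) * Complex.I) - Complex.exp ((θ:ℂ) * Complex.I)
      = -2 * Complex.I * ((Real.sin θ : ℝ) : ℂ) := by
  rw [Complex.exp_mul_I, Complex.exp_mul_I, Complex.cos_neg, Complex.sin_neg,
    Complex.ofReal_sin]
  ring

lemma sign_measurable : Measurable Real.sign := by
  have : Real.sign = fun r : ℝ => if r < 0 then (-1:ℝ) else if 0 < r then 1 else 0 := by
    funext r; rfl
  rw [this]
  exact Measurable.ite (measurableSet_lt measurable_id measurable_const) measurable_const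
    (Measurable.ite (measurableSet_lt measurable_const measurable_id) measurable_const
      measurable_const)

lemma abs_sign_le (x : ℝ) : |Real.sign x| ≤ 1 := by
  rcases Real.sign_apply_eq x with h | h | h <;> rw [h] <;> norm_num

lemma memLp_liftIco (F : ℝ → ℂ) (hmeas : Measurable F) (C : ℝ)
    (hC : ∀ x ∈ Ico (-1:ℝ) 1, ‖F x‖ ≤ C) :
    MemLp (AddCircle.liftIco (2:ℝ) (-1) F) 2 haarAddCircle := by
  have hmeas' : Measurable (AddCircle.liftIco (2:ℝ) (-1) F) := by
    have h : AddCircle.liftIco (2:ℝ) (-1) F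
        = (F ∘ Subtype.val) ∘ (AddCircle.measurableEquivIco (2:ℝ) (-1)) := rfl
    rw [h]
    exact (hmeas.comp measurable_subtype_coe).comp
      (AddCircle.measurableEquivIco (2:ℝ) (-1)).measurable
  have hbd : ∀ z, ‖AddCircle.liftIco (2:ℝ) (-1) F z‖ ≤ C := by
    intro z
    have hz := ((AddCircle.equivIco (2:ℝ) (-1)) z).2
    have h1 : AddCircle.liftIco (2:ℝ) (-1) F z = F ((AddCircle.equivIco (2:ℝ) (-1)) z) := rfl
    rw [h1]
    exact hC _ ⟨hz.1, by linarith [hz.2]⟩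
  exact (memLp_top_of_bound hmeas'.aestronglyMeasurable C (ae_of_all _ hbd)).mono_exponent
    le_top



local instance fact2'' : Fact (0 < (2:ℝ)) := ⟨by norm_num⟩

lemma even_coeff (f : ℝ → ℝ) (hf : Continuous f) (n : ℤ) :
    ((1 / (2:ℝ)) • ∫ x in (-1:ℝ)..1,
        (fourier (-n) ((x:ℝ) : AddCircle (2:ℝ))) • ((f |x| : ℝ) : ℂ))
      = ((∫ x in (0:ℝ)..1, f x * Real.cos (π * n * x) : ℝ) : ℂ) := by
  set E : ℝ → ℂ := fun x => Complex.exp (-((π * n * x : ℝ) : ℂ) * Complex.I) * ((f |x| : ℝ) : ℂ)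
    with hE
  have hEcont : Continuous E := by
    apply Continuous.mul
    · apply Complex.continuous_exp.comp
      fun_prop
    · fun_prop
  have hint : ∀ a b : ℝ, IntervalIntegrable E volume a b := fun a b =>
    hEcont.intervalIntegrable a b
  have hintegrand : (∫ x in (-1:ℝ)..1,
      (fourier (-n) ((x:ℝ) : AddCircle (2:ℝ))) • ((f |x| : ℝ) : ℂ)) = ∫ x in (-1:ℝ)..1, E x := by
    refine intervalIntegral.integral_congr fun x _ => ?_
    rw [smul_eq_mul, fourier_eval]
  have hsplit : (∫ x in (-1:ℝ)..1, E x) = (∫ x in (-1:ℝ)..0, E x) + ∫ x in (0:ℝ)..1, E x :=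
    (intervalIntegral.integral_add_adjacent_intervals (hint _ _) (hint _ _)).symm
  have hneg : (∫ x in (-1:ℝ)..0, E x) = ∫ x in (0:ℝ)..1, E (-x) := by
    have h := intervalIntegral.integral_comp_neg (a := (0:ℝ)) (b := 1) E
    rw [neg_zero] at h
    exact h.symm
  have hEneg : ∀ x : ℝ, E (-x) = Complex.exp (((π * n * x : ℝ) : ℂ) * Complex.I) * ((f |x| : ℝ) : ℂ) := by
    intro x
    rw [hE]
    simp only [abs_neg]
    congr 2
    push_cast
    ring
  have hcomb : (∫ x in (0:ℝ)..1, E (-x)) + (∫ x in (0:ℝ)..1, E x)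
      = ∫ x in (0:ℝ)..1, (2:ℂ) * ((f x * Real.cos (π * n * x) : ℝ) : ℂ) := by
    rw [← intervalIntegral.integral_add
      (Continuous.intervalIntegrable (by fun_prop : Continuous fun x : ℝ => E (-x)) _ _)
      (hint _ _)]
    refine intervalIntegral.integral_congr fun x hx => ?_
    rw [Set.uIcc_of_le (by norm_num : (0:ℝ) ≤ 1)] at hx
    have hx0 : |x| = x := abs_of_nonneg hx.1
    have h2 := even_combine (π * n * x)
    simp only [hE, abs_neg, hx0]
    have harg : -((π * n * (-x) : ℝ) : ℂ) * Complex.I = ((π * n * x : ℝ) : ℂ) * Complex.I := by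
      push_cast; ring
    rw [harg, ← add_mul, add_comm (Complex.exp (((π * n * x : ℝ) : ℂ) * Complex.I)), h2]
    push_cast
    ring
  have hOf : (∫ x in (0:ℝ)..1, (((f x * Real.cos (π * n * x)) : ℝ) : ℂ))
      = ((∫ x in (0:ℝ)..1, f x * Real.cos (π * n * x) : ℝ) : ℂ) :=
    RCLike.intervalIntegral_ofReal
  rw [hintegrand, hsplit, hneg, hcomb, intervalIntegral.integral_const_mul, hOf,
    Complex.real_smul]
  push_cast
  ring




lemma odd_combine' (θ : ℝ) :
    Complex.exp (-(θ:ℂ) * Complex.I) - Complex.exp ((θ:ℂ) * Complex.I)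
      = -2 * Complex.I * ((Real.sin θ : ℝ) : ℂ) := by
  rw [Complex.exp_mul_I, Complex.exp_mul_I, Complex.cos_neg, Complex.sin_neg,
    Complex.ofReal_sin]
  ring

lemma ce_cont (n : ℤ) : Continuous fun x : ℝ => Complex.exp (-((π * n * x : ℝ) : ℂ) * Complex.I) := by
  apply Complex.continuous_exp.comp
  fun_prop

lemma ce_cont' (n : ℤ) : Continuous fun x : ℝ => Complex.exp (((π * n * x : ℝ) : ℂ) * Complex.I) := by
  apply Complex.continuous_exp.comp
  fun_prop

lemma odd_coeff (g : ℝ → ℝ) (hg : Continuous g) (n : ℤ) :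
    ((1 / (2:ℝ)) • ∫ x in (-1:ℝ)..1,
        (fourier (-n) ((x:ℝ) : AddCircle (2:ℝ))) • ((Real.sign x * g |x| : ℝ) : ℂ))
      = -Complex.I * ((∫ x in (0:ℝ)..1, g x * Real.sin (π * n * x) : ℝ) : ℂ) := by
  set H : ℝ → ℂ := fun x => ((Real.sign x * g |x| : ℝ) : ℂ) with hH
  set E : ℝ → ℂ := fun x => Complex.exp (-((π * n * x : ℝ) : ℂ) * Complex.I) * H x with hE
  have hHneg : ∀ x : ℝ, H (-x) = -H x := by
    intro x
    simp only [hH, Real.sign_neg, abs_neg]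
    push_cast
    ring
  have hI1 : IntervalIntegrable E volume 0 1 := by
    rw [intervalIntegrable_iff_integrableOn_Ioc_of_le (by norm_num : (0:ℝ) ≤ 1)]
    refine IntegrableOn.congr_fun
      (((ce_cont n).mul (by fun_prop : Continuous fun x : ℝ => ((g x : ℝ) : ℂ))).integrableOn_Ioc)
      (fun x hx => ?_) measurableSet_Ioc
    simp only [hE, hH, Real.sign_of_pos hx.1, abs_of_pos hx.1, one_mul, Pi.mul_apply]
  have hI2 : IntervalIntegrable E volume (-1) 0 := by
    rw [intervalIntegrable_iff_integrableOn_Ioc_of_le (by norm_num : (-1:ℝ) ≤ 0),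
      integrableOn_Ioc_iff_integrableOn_Ioo]
    refine IntegrableOn.congr_fun
      ((Continuous.integrableOn_Icc ((ce_cont n).mul
        (by fun_prop : Continuous fun x : ℝ => -((g (-x) : ℝ) : ℂ)))).mono_set
        Set.Ioo_subset_Icc_self)
      (fun x hx => ?_) measurableSet_Ioo
    simp only [hE, hH, Real.sign_of_neg hx.2, abs_of_neg hx.2, Pi.mul_apply]
    push_cast
    ring
  have hI3 : IntervalIntegrable (fun x => E (-x)) volume 0 1 := by
    rw [intervalIntegrable_iff_integrableOn_Ioc_of_le (by norm_num : (0:ℝ) ≤ 1)]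
    refine IntegrableOn.congr_fun
      (Continuous.integrableOn_Ioc ((ce_cont' n).mul
        (by fun_prop : Continuous fun x : ℝ => -((g x : ℝ) : ℂ))))
      (fun x hx => ?_) measurableSet_Ioc
    have h1 : -((π * n * (-x) : ℝ) : ℂ) * Complex.I = ((π * n * x : ℝ) : ℂ) * Complex.I := by
      push_cast; ring
    simp only [hE]
    rw [h1, hHneg x]
    simp only [hH, Real.sign_of_pos hx.1, abs_of_pos hx.1, one_mul, Pi.mul_apply]
  have hintegrand : (∫ x in (-1:ℝ)..1,
      (fourier (-n) ((x:ℝ) : AddCircle (2:ℝ))) • ((Real.sign x * g |x| : ℝ) : ℂ))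
      = ∫ x in (-1:ℝ)..1, E x := by
    refine intervalIntegral.integral_congr fun x _ => ?_
    rw [smul_eq_mul, fourier_eval]
  have hsplit : (∫ x in (-1:ℝ)..1, E x) = (∫ x in (-1:ℝ)..0, E x) + ∫ x in (0:ℝ)..1, E x :=
    (intervalIntegral.integral_add_adjacent_intervals hI2 hI1).symm
  have hneg : (∫ x in (-1:ℝ)..0, E x) = ∫ x in (0:ℝ)..1, E (-x) := by
    have h := intervalIntegral.integral_comp_neg (a := (0:ℝ)) (b := 1) E
    rw [neg_zero] at h
    exact h.symm
  have hcomb : (∫ x in (0:ℝ)..1, E (-x)) + (∫ x in (0:ℝ)..1, E x)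
      = ∫ x in (0:ℝ)..1, (-2 * Complex.I) * ((g x * Real.sin (π * n * x) : ℝ) : ℂ) := by
    rw [← intervalIntegral.integral_add hI3 hI1]
    refine intervalIntegral.integral_congr_ae (Filter.Eventually.of_forall fun x hx => ?_)
    rw [Set.uIoc_of_le (by norm_num : (0:ℝ) ≤ 1)] at hx
    have h1 : -((π * n * (-x) : ℝ) : ℂ) * Complex.I = ((π * n * x : ℝ) : ℂ) * Complex.I := by
      push_cast; ring
    have h2 := odd_combine' (π * n * x)
    simp only [hE]
    rw [h1, hHneg x]
    simp only [hH, Real.sign_of_pos hx.1, abs_of_pos hx.1, one_mul]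
    push_cast
    push_cast at h2
    linear_combination ((g x : ℝ) : ℂ) * h2
  have hOf : (∫ x in (0:ℝ)..1, (((g x * Real.sin (π * n * x)) : ℝ) : ℂ))
      = ((∫ x in (0:ℝ)..1, g x * Real.sin (π * n * x) : ℝ) : ℂ) :=
    RCLike.intervalIntegral_ofReal
  rw [hintegrand, hsplit, hneg, hcomb, intervalIntegral.integral_const_mul, hOf,
    Complex.real_smul]
  push_cast
  ring



lemma norm_sq_ofReal (r : ℝ) : ‖((r : ℝ) : ℂ)‖ ^ 2 = r ^ 2 := by
  rw [Complex.norm_real, Real.norm_eq_abs, _root_.sq_abs]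

lemma even_value (f : ℝ → ℝ) (hf : Continuous f) :
    (1 / 2) * (∫ x in (-1:ℝ)..1, ‖((f |x| : ℝ) : ℂ)‖ ^ 2) = ∫ x in (0:ℝ)..1, f x ^ 2 := by
  have h0 : (∫ x in (-1:ℝ)..1, ‖((f |x| : ℝ) : ℂ)‖ ^ 2) = ∫ x in (-1:ℝ)..1, f |x| ^ 2 := by
    refine intervalIntegral.integral_congr fun x _ => ?_
    exact norm_sq_ofReal _
  have hN : Continuous fun x : ℝ => f |x| ^ 2 := by fun_prop
  have hsplit : (∫ x in (-1:ℝ)..1, f |x| ^ 2)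
      = (∫ x in (-1:ℝ)..0, f |x| ^ 2) + ∫ x in (0:ℝ)..1, f |x| ^ 2 :=
    (intervalIntegral.integral_add_adjacent_intervals (hN.intervalIntegrable _ _)
      (hN.intervalIntegrable _ _)).symm
  have hneg : (∫ x in (-1:ℝ)..0, f |x| ^ 2) = ∫ x in (0:ℝ)..1, f |x| ^ 2 := by
    have h := intervalIntegral.integral_comp_neg (a := (0:ℝ)) (b := 1)
      (fun x : ℝ => f |x| ^ 2)
    rw [neg_zero] at h
    simp only [abs_neg] at h
    exact h.symm ▸ rfl
  have hid : (∫ x in (0:ℝ)..1, f |x| ^ 2) = ∫ x in (0:ℝ)..1, f x ^ 2 := by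
    refine intervalIntegral.integral_congr fun x hx => ?_
    rw [Set.uIcc_of_le (by norm_num : (0:ℝ) ≤ 1)] at hx
    rw [_root_.abs_of_nonneg hx.1]
  rw [h0, hsplit, hneg, hid]
  ring

lemma odd_value (g : ℝ → ℝ) (hg : Continuous g) :
    (1 / 2) * (∫ x in (-1:ℝ)..1, ‖((Real.sign x * g |x| : ℝ) : ℂ)‖ ^ 2)
      = ∫ x in (0:ℝ)..1, g x ^ 2 := by
  set M : ℝ → ℝ := fun x => (Real.sign x * g |x|) ^ 2 with hM
  have h0 : (∫ x in (-1:ℝ)..1, ‖((Real.sign x * g |x| : ℝ) : ℂ)‖ ^ 2)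
      = ∫ x in (-1:ℝ)..1, M x := by
    refine intervalIntegral.integral_congr fun x _ => ?_
    exact norm_sq_ofReal _
  have hMneg : ∀ x : ℝ, M (-x) = M x := by
    intro x
    simp only [hM, Real.sign_neg, abs_neg]
    ring
  have hI1 : IntervalIntegrable M volume 0 1 := by
    rw [intervalIntegrable_iff_integrableOn_Ioc_of_le (by norm_num : (0:ℝ) ≤ 1)]
    refine IntegrableOn.congr_fun
      ((by fun_prop : Continuous fun x : ℝ => g x ^ 2).integrableOn_Ioc)
      (fun x hx => ?_) measurableSet_Ioc
    simp only [hM, Real.sign_of_pos hx.1, _root_.abs_of_pos hx.1, one_mul]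
  have hI2 : IntervalIntegrable M volume (-1) 0 := by
    rw [intervalIntegrable_iff_integrableOn_Ioc_of_le (by norm_num : (-1:ℝ) ≤ 0),
      integrableOn_Ioc_iff_integrableOn_Ioo]
    refine IntegrableOn.congr_fun
      (((by fun_prop : Continuous fun x : ℝ => g (-x) ^ 2).integrableOn_Icc).mono_set
        Set.Ioo_subset_Icc_self)
      (fun x hx => ?_) measurableSet_Ioo
    simp only [hM, Real.sign_of_neg hx.2, _root_.abs_of_neg hx.2]
    ring
  have hsplit : (∫ x in (-1:ℝ)..1, M x) = (∫ x in (-1:ℝ)..0, M x) + ∫ x in (0:ℝ)..1, M x :=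
    (intervalIntegral.integral_add_adjacent_intervals hI2 hI1).symm
  have hneg : (∫ x in (-1:ℝ)..0, M x) = ∫ x in (0:ℝ)..1, M x := by
    have h := intervalIntegral.integral_comp_neg (a := (0:ℝ)) (b := 1) M
    rw [neg_zero] at h
    rw [← h]
    refine intervalIntegral.integral_congr fun x _ => hMneg x
  have hid : (∫ x in (0:ℝ)..1, M x) = ∫ x in (0:ℝ)..1, g x ^ 2 := by
    refine intervalIntegral.integral_congr_ae (Filter.Eventually.of_forall fun x hx => ?_)
    rw [Set.uIoc_of_le (by norm_num : (0:ℝ) ≤ 1)] at hx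
    simp only [hM, Real.sign_of_pos hx.1, _root_.abs_of_pos hx.1, one_mul]
  rw [h0, hsplit, hneg, hid]
  ring

lemma by_parts (f : ℝ → ℝ) (hf : ContDiff ℝ 1 f) (ℓ : ℕ) :
    (∫ x in (0:ℝ)..1, deriv f x * Real.sin (π * ℓ * x))
      = -(π * ℓ) * ∫ x in (0:ℝ)..1, f x * Real.cos (π * ℓ * x) := by
  have hu : ∀ x ∈ Set.uIcc (0:ℝ) 1, HasDerivAt f (deriv f x) x := fun x _ =>
    ((hf.differentiable one_ne_zero) x).hasDerivAt
  have hv : ∀ x ∈ Set.uIcc (0:ℝ) 1, HasDerivAt (fun y : ℝ => Real.sin (π * ℓ * y))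
      (π * ℓ * Real.cos (π * ℓ * x)) x := by
    intro x _
    have h1 : HasDerivAt (fun y : ℝ => π * ℓ * y) (π * ℓ) x := by
      simpa using (hasDerivAt_id x).const_mul (π * ℓ : ℝ)
    have h2 := h1.sin
    simpa [mul_comm] using h2
  have hu' : IntervalIntegrable (deriv f) volume 0 1 :=
    (hf.continuous_deriv le_rfl).intervalIntegrable _ _
  have hv' : IntervalIntegrable (fun x : ℝ => π * ℓ * Real.cos (π * ℓ * x)) volume 0 1 := by
    apply Continuous.intervalIntegrable
    fun_prop
  have key := intervalIntegral.integral_deriv_mul_eq_sub hu hv hu' hv'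
  have hsin1 : Real.sin (π * ℓ * 1) = 0 := by
    rw [mul_one, mul_comm]
    exact Real.sin_nat_mul_pi ℓ
  have hsin0 : Real.sin (π * ℓ * 0) = 0 := by
    rw [mul_zero, Real.sin_zero]
  rw [hsin1, hsin0] at key
  have hadd : (∫ x in (0:ℝ)..1, (deriv f x * Real.sin (π * ℓ * x)
        + f x * (π * ℓ * Real.cos (π * ℓ * x))))
      = (∫ x in (0:ℝ)..1, deriv f x * Real.sin (π * ℓ * x))
        + ∫ x in (0:ℝ)..1, f x * (π * ℓ * Real.cos (π * ℓ * x)) := by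
    apply intervalIntegral.integral_add
    · apply Continuous.intervalIntegrable
      exact (hf.continuous_deriv le_rfl).mul (by fun_prop)
    · apply Continuous.intervalIntegrable
      exact hf.continuous.mul (by fun_prop)
  have hconst : (∫ x in (0:ℝ)..1, f x * (π * ℓ * Real.cos (π * ℓ * x)))
      = (π * ℓ) * ∫ x in (0:ℝ)..1, f x * Real.cos (π * ℓ * x) := by
    rw [← intervalIntegral.integral_const_mul]
    refine intervalIntegral.integral_congr fun x _ => by ring
  rw [hadd, hconst] at key
  linarith [key]




/-- Spectral (Parseval) expression of the `H¹(0,1)` norm in the Poincaré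
basis: for `f` continuously differentiable with coefficients
`c_ℓ = ∫₀¹ f φ_ℓ`, the series `Σ_ℓ (1+λ_ℓ) c_ℓ²` (with `λ_ℓ = π²ℓ²`)
converges and equals `∫₀¹ f² + ∫₀¹ f′²`. -/
theorem poincare_basis_parseval_h1_norm
    (φ : ℕ → ℝ → ℝ)
    (hφ : ∀ ℓ x, φ ℓ x =
      if ℓ = 0 then 1 else Real.sqrt 2 * Real.cos (Real.pi * ℓ * x))
    (f : ℝ → ℝ) (hf : ContDiff ℝ 1 f)
    (c : ℕ → ℝ)
    (hc : ∀ ℓ, c ℓ = ∫ x in (0 : ℝ)..1, f x * φ ℓ x) :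
    HasSum (fun ℓ : ℕ => (1 + Real.pi ^ 2 * ℓ ^ 2) * c ℓ ^ 2)
      ((∫ x in (0 : ℝ)..1, f x ^ 2) + ∫ x in (0 : ℝ)..1, deriv f x ^ 2) := by
  have hfc : Continuous f := hf.continuous
  have hf'c : Continuous (deriv f) := hf.continuous_deriv le_rfl
  set A : ℤ → ℝ := fun n => ∫ x in (0:ℝ)..1, f x * Real.cos (π * n * x) with hA
  set B : ℤ → ℝ := fun n => ∫ x in (0:ℝ)..1, deriv f x * Real.sin (π * n * x) with hB
  -- Memℒp for the even extension of f
  obtain ⟨C₁, hC₁⟩ := (isCompact_Icc : IsCompact (Icc (0:ℝ) 1)).exists_bound_of_continuousOn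
    hfc.continuousOn
  obtain ⟨C₂, hC₂⟩ := (isCompact_Icc : IsCompact (Icc (0:ℝ) 1)).exists_bound_of_continuousOn
    hf'c.continuousOn
  have hC₂0 : 0 ≤ C₂ := le_trans (norm_nonneg _) (hC₂ 0 ⟨le_rfl, zero_le_one⟩)
  have habs : ∀ x ∈ Ico (-1:ℝ) 1, |x| ∈ Icc (0:ℝ) 1 := fun x hx =>
    ⟨abs_nonneg x, abs_le.mpr ⟨hx.1, hx.2.le⟩⟩
  have hFm : MemLp (AddCircle.liftIco (2:ℝ) (-1) (fun x => ((f |x| : ℝ) : ℂ))) 2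
      haarAddCircle := by
    refine memLp_liftIco _ ?_ C₁ ?_
    · exact (Complex.continuous_ofReal.comp (hfc.comp _root_.continuous_abs)).measurable
    · intro x hx
      rw [Complex.norm_real]
      exact hC₁ _ (habs x hx)
  have hHm : MemLp (AddCircle.liftIco (2:ℝ) (-1)
      (fun x => ((Real.sign x * deriv f |x| : ℝ) : ℂ))) 2 haarAddCircle := by
    refine memLp_liftIco _ ?_ C₂ ?_
    · exact (Complex.measurable_ofReal.comp
        (sign_measurable.mul (hf'c.comp _root_.continuous_abs).measurable))
    · intro x hx
      rw [Complex.norm_real, Real.norm_eq_abs, abs_mul]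
      have h1 := hC₂ _ (habs x hx)
      rw [Real.norm_eq_abs] at h1
      have h2 := mul_le_mul (abs_sign_le x) h1 (abs_nonneg _) zero_le_one
      simpa using h2
  -- Parseval for the even extension
  have hPe : HasSum (fun n : ℤ => ‖(1 / (2:ℝ)) • ∫ x in (-1:ℝ)..1,
        (fourier (-n) ((x:ℝ) : AddCircle (2:ℝ))) • ((f |x| : ℝ) : ℂ)‖ ^ 2)
      ((1 / 2) * ∫ x in (-1:ℝ)..1, ‖((f |x| : ℝ) : ℂ)‖ ^ 2) := parseval2 _ hFm
  have hPe' : HasSum (fun n : ℤ => A n ^ 2) (∫ x in (0:ℝ)..1, f x ^ 2) := by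
    rw [even_value f hfc] at hPe
    have h2 : (fun n : ℤ => ‖(1 / (2:ℝ)) • ∫ x in (-1:ℝ)..1,
        (fourier (-n) ((x:ℝ) : AddCircle (2:ℝ))) • ((f |x| : ℝ) : ℂ)‖ ^ 2)
        = fun n : ℤ => A n ^ 2 := by
      funext n
      rw [even_coeff f hfc n, norm_sq_ofReal, hA]
    rwa [h2] at hPe
  -- Parseval for the odd extension of deriv f
  have hPo : HasSum (fun n : ℤ => ‖(1 / (2:ℝ)) • ∫ x in (-1:ℝ)..1,
        (fourier (-n) ((x:ℝ) : AddCircle (2:ℝ))) • ((Real.sign x * deriv f |x| : ℝ) : ℂ)‖ ^ 2)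
      ((1 / 2) * ∫ x in (-1:ℝ)..1, ‖((Real.sign x * deriv f |x| : ℝ) : ℂ)‖ ^ 2) :=
    parseval2 _ hHm
  have hPo' : HasSum (fun n : ℤ => B n ^ 2) (∫ x in (0:ℝ)..1, deriv f x ^ 2) := by
    rw [odd_value (deriv f) hf'c] at hPo
    have h2 : (fun n : ℤ => ‖(1 / (2:ℝ)) • ∫ x in (-1:ℝ)..1,
        (fourier (-n) ((x:ℝ) : AddCircle (2:ℝ))) • ((Real.sign x * deriv f |x| : ℝ) : ℂ)‖ ^ 2)
        = fun n : ℤ => B n ^ 2 := by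
      funext n
      rw [odd_coeff (deriv f) hf'c n, norm_mul, norm_neg, Complex.norm_I, one_mul,
        norm_sq_ofReal, hB]
    rwa [h2] at hPo
  -- symmetry
  have hA_neg : ∀ n : ℤ, A (-n) = A n := by
    intro n
    simp only [hA]
    refine intervalIntegral.integral_congr fun x _ => ?_
    rw [show π * ((-n : ℤ) : ℝ) * x = -(π * (n:ℝ) * x) by push_cast; ring, Real.cos_neg]
  have hB_neg : ∀ n : ℤ, B (-n) = -B n := by
    intro n
    simp only [hB]
    rw [← intervalIntegral.integral_neg]
    refine intervalIntegral.integral_congr fun x _ => ?_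
    rw [show π * ((-n : ℤ) : ℝ) * x = -(π * (n:ℝ) * x) by push_cast; ring, Real.sin_neg]
    ring
  have hB0 : B 0 = 0 := by
    simp only [hB]
    simp
  -- coefficients relation
  have hceq : ∀ ℓ : ℕ, c ℓ = if ℓ = 0 then A 0 else Real.sqrt 2 * A (ℓ:ℤ) := by
    intro ℓ
    rcases eq_or_ne ℓ 0 with h | h
    · subst h
      rw [if_pos rfl, hc 0, hA]
      refine intervalIntegral.integral_congr fun x _ => ?_
      rw [hφ 0 x]
      norm_num
    · rw [if_neg h, hc ℓ, hA]
      have h1 : (∫ x in (0:ℝ)..1, f x * φ ℓ x)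
          = ∫ x in (0:ℝ)..1, Real.sqrt 2 * (f x * Real.cos (π * ((ℓ:ℤ):ℝ) * x)) := by
        refine intervalIntegral.integral_congr fun x _ => ?_
        rw [hφ ℓ x, if_neg h]
        push_cast
        ring
      rw [h1, intervalIntegral.integral_const_mul]
  -- even part as a sum over ℕ
  have hNatE := hPe'.nat_add_neg
  have hite : HasSum (fun ℓ : ℕ => if ℓ = 0 then A 0 ^ 2 else 0) (A 0 ^ 2) :=
    hasSum_ite_eq 0 _
  have hSumEven : HasSum (fun ℓ : ℕ => c ℓ ^ 2) (∫ x in (0:ℝ)..1, f x ^ 2) := by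
    have h2 := hNatE.sub hite
    have hfun : (fun ℓ : ℕ => (A (ℓ:ℤ) ^ 2 + A (-(ℓ:ℤ)) ^ 2)
        - if ℓ = 0 then A 0 ^ 2 else 0) = fun ℓ : ℕ => c ℓ ^ 2 := by
      funext ℓ
      rcases eq_or_ne ℓ 0 with h | h
      · subst h
        simp [hceq 0]
      · rw [if_neg h, hA_neg, hceq ℓ, if_neg h, mul_pow, Real.sq_sqrt (by norm_num : (0:ℝ) ≤ 2)]
        ring
    rw [hfun] at h2
    simpa using h2
  -- odd part as a sum over ℕ
  have hNatO := hPo'.nat_add_neg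
  have hSumOdd : HasSum (fun ℓ : ℕ => (π ^ 2 * (ℓ:ℝ) ^ 2) * c ℓ ^ 2)
      (∫ x in (0:ℝ)..1, deriv f x ^ 2) := by
    have hfun : (fun ℓ : ℕ => B (ℓ:ℤ) ^ 2 + B (-(ℓ:ℤ)) ^ 2)
        = fun ℓ : ℕ => (π ^ 2 * (ℓ:ℝ) ^ 2) * c ℓ ^ 2 := by
      funext ℓ
      have hcast : ∀ x : ℝ, π * ((ℓ:ℤ):ℝ) * x = π * (ℓ:ℝ) * x := by
        intro x; push_cast; ring
      have hBA : B (ℓ:ℤ) = -(π * ℓ) * A (ℓ:ℤ) := by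
        have h1 : B (ℓ:ℤ) = ∫ x in (0:ℝ)..1, deriv f x * Real.sin (π * (ℓ:ℝ) * x) := by
          rw [hB]
          exact intervalIntegral.integral_congr fun x _ => by rw [hcast x]
        have h2 : A (ℓ:ℤ) = ∫ x in (0:ℝ)..1, f x * Real.cos (π * (ℓ:ℝ) * x) := by
          rw [hA]
          exact intervalIntegral.integral_congr fun x _ => by rw [hcast x]
        rw [h1, h2, by_parts f hf ℓ]
      rw [hB_neg, hBA]
      rcases eq_or_ne ℓ 0 with h | h
      · subst h
        push_cast
        ring
      · rw [hceq ℓ, if_neg h, mul_pow, mul_pow, Real.sq_sqrt (by norm_num : (0:ℝ) ≤ 2)]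
        ring
    rw [hfun, hB0] at hNatO
    simpa using hNatO
  have hfinal := hSumEven.add hSumOdd
  have hfun : (fun ℓ : ℕ => c ℓ ^ 2 + (π ^ 2 * (ℓ:ℝ) ^ 2) * c ℓ ^ 2)
      = fun ℓ : ℕ => (1 + π ^ 2 * (ℓ:ℝ) ^ 2) * c ℓ ^ 2 := by
    funext ℓ; ring
  rwa [hfun] at hfinal
end

section
/- Let f : [0,1] → ℝ be continuously differentiable, let ℓ ≥ 1, and let c_ℓ = ∫₀¹ f(x)·φ_ℓ(x) dx. Then sup_{x∈[0,1]} | f(x)·φ_ℓ(x) − c_ℓ | ≤ min( √2·sup_{[0,1]}|f| + min( sup_{[0,1]}|f|, sup_{[0,1]}|f′|/(πℓ) ), √2·( πℓ·sup_{[0,1]}|f| + sup_{[0,1]}|f′| ) ). -/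
open intervalIntegral Real

lemma abs_cos_pi_int : ∫ u in (0:ℝ)..Real.pi, |Real.cos u| = 2 := by
  have hpi := Real.pi_pos
  have hsplit := intervalIntegral.integral_add_adjacent_intervals
    (a := (0:ℝ)) (b := Real.pi/2) (c := Real.pi)
    ((Real.continuous_cos.abs).intervalIntegrable (μ := MeasureTheory.volume) _ _)
    ((Real.continuous_cos.abs).intervalIntegrable (μ := MeasureTheory.volume) _ _)
  have h1 : ∫ u in (0:ℝ)..(Real.pi/2), |Real.cos u| = 1 := by
    rw [intervalIntegral.integral_congr (g := Real.cos)
      (fun u hu => by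
        rw [Set.uIcc_of_le (by positivity)] at hu
        exact abs_of_nonneg (Real.cos_nonneg_of_mem_Icc ⟨by linarith [hu.1], hu.2⟩))]
    simp [integral_cos]
  have h2 : ∫ u in (Real.pi/2)..Real.pi, |Real.cos u| = 1 := by
    rw [intervalIntegral.integral_congr (g := fun u => -Real.cos u)
      (fun u hu => by
        rw [Set.uIcc_of_le (by linarith)] at hu
        exact abs_of_nonpos (Real.cos_nonpos_of_pi_div_two_le_of_le hu.1 (by linarith [hu.2])))]
    simp [integral_cos]
  rw [← hsplit, h1, h2]; norm_num

lemma abs_sin_pi_int : ∫ u in (0:ℝ)..Real.pi, |Real.sin u| = 2 := by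
  have hpi := Real.pi_pos
  rw [intervalIntegral.integral_congr (g := Real.sin)
    (fun u hu => by
      rw [Set.uIcc_of_le (by linarith)] at hu
      exact abs_of_nonneg (Real.sin_nonneg_of_nonneg_of_le_pi hu.1 hu.2))]
  simp [integral_sin]; norm_num

lemma int_abs_scaled (g : ℝ → ℝ) (hg : Continuous g)
    (hper : Function.Periodic (fun u => |g u|) Real.pi)
    (hval : ∫ u in (0:ℝ)..Real.pi, |g u| = 2)
    (ℓ : ℕ) (hℓ : 1 ≤ ℓ) :
    ∫ x in (0:ℝ)..1, |g (Real.pi * ℓ * x)| = 2 / Real.pi := by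
  have hpi := Real.pi_pos
  have hk : (Real.pi * ℓ : ℝ) ≠ 0 := by positivity
  have hcomp := intervalIntegral.integral_comp_mul_left (a := (0:ℝ)) (b := 1)
    (f := fun u => |g u|) (c := Real.pi * ℓ) hk
  have hint : ∀ t₁ t₂ : ℝ, IntervalIntegrable (fun u => |g u|) MeasureTheory.volume t₁ t₂ :=
    fun t₁ t₂ => (hg.abs).intervalIntegrable _ _
  have hz := hper.intervalIntegral_add_zsmul_eq (ℓ : ℤ) 0 hint
  simp only [zero_add, zsmul_eq_mul, Int.cast_natCast] at hz
  rw [hcomp]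
  rw [mul_zero, mul_one, show (Real.pi * ℓ : ℝ) = ℓ * Real.pi by ring, hz, hval]
  simp only [smul_eq_mul]
  field_simp

lemma int_abs_cos (ℓ : ℕ) (hℓ : 1 ≤ ℓ) :
    ∫ x in (0:ℝ)..1, |Real.cos (Real.pi * ℓ * x)| = 2 / Real.pi :=
  int_abs_scaled _ Real.continuous_cos
    (fun u => by simp [Real.cos_add]) abs_cos_pi_int ℓ hℓ

lemma int_abs_sin (ℓ : ℕ) (hℓ : 1 ≤ ℓ) :
    ∫ x in (0:ℝ)..1, |Real.sin (Real.pi * ℓ * x)| = 2 / Real.pi :=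
  int_abs_scaled _ Real.continuous_sin
    (fun u => by simp [Real.sin_add]) abs_sin_pi_int ℓ hℓ

lemma aux_two_div_pi (a : ℝ) (ha : 0 ≤ a) : Real.sqrt 2 * (a * (2 / Real.pi)) ≤ a := by
  have hpi := Real.pi_gt_three
  have hs2 : Real.sqrt 2 ≤ 1.5 := by
    rw [show (1.5:ℝ) = Real.sqrt (1.5^2) by rw [Real.sqrt_sq]; norm_num]
    exact Real.sqrt_le_sqrt (by norm_num)
  rw [show Real.sqrt 2 * (a * (2 / Real.pi)) = Real.sqrt 2 * a * 2 / Real.pi by ring,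
    div_le_iff₀ (by linarith)]
  nlinarith [Real.sqrt_nonneg 2]

lemma sup_abs_bound (g : ℝ → ℝ) (hg : Continuous g) :
    ∀ x ∈ Set.Icc (0:ℝ) 1, |g x| ≤ ⨆ x : Set.Icc (0:ℝ) 1, |g x.1| := by
  intro x hx
  have hb : BddAbove (Set.range fun x : Set.Icc (0:ℝ) 1 => |g x.1|) := by
    have h1 : (Set.range fun x : Set.Icc (0:ℝ) 1 => |g x.1|)
        = (fun y => |g y|) '' Set.Icc 0 1 := by
      rw [show (fun x : Set.Icc (0:ℝ) 1 => |g x.1|) = (fun y => |g y|) ∘ Subtype.val from rfl,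
        Set.range_comp, Subtype.range_coe]
    rw [h1]
    exact (isCompact_Icc.image hg.abs).bddAbove
  exact le_ciSup hb ⟨x, hx⟩


/-- Sup-norm bound on the centered product function `h̃_ℓ = f φ_ℓ − c_ℓ`:
`sup|f φ_ℓ − c_ℓ| ≤ min( √2 sup|f| + min(sup|f|, sup|f′|/(πℓ)),
√2 (πℓ sup|f| + sup|f′|) )`. -/
theorem centered_product_sup_bound
    (φ : ℕ → ℝ → ℝ)
    (hφ : ∀ ℓ x, φ ℓ x =
      if ℓ = 0 then 1 else Real.sqrt 2 * Real.cos (Real.pi * ℓ * x))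
    (f : ℝ → ℝ) (hf : ContDiff ℝ 1 f)
    (ℓ : ℕ) (hℓ : 1 ≤ ℓ)
    (c : ℝ) (hc : c = ∫ x in (0 : ℝ)..1, f x * φ ℓ x) :
    (⨆ x : Set.Icc (0 : ℝ) 1, |f x.1 * φ ℓ x.1 - c|)
      ≤ min
        (Real.sqrt 2 * (⨆ x : Set.Icc (0 : ℝ) 1, |f x.1|)
          + min (⨆ x : Set.Icc (0 : ℝ) 1, |f x.1|)
              ((⨆ x : Set.Icc (0 : ℝ) 1, |deriv f x.1|) / (Real.pi * ℓ)))
        (Real.sqrt 2 * (Real.pi * ℓ * (⨆ x : Set.Icc (0 : ℝ) 1, |f x.1|)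
          + ⨆ x : Set.Icc (0 : ℝ) 1, |deriv f x.1|)) := by
  have hpi := Real.pi_pos
  have hpi3 := Real.pi_gt_three
  have hs2 : Real.sqrt 2 ≤ 1.5 := by
    rw [show (1.5:ℝ) = Real.sqrt (1.5^2) by rw [Real.sqrt_sq]; norm_num]
    exact Real.sqrt_le_sqrt (by norm_num)
  have hs2nn : (0:ℝ) ≤ Real.sqrt 2 := Real.sqrt_nonneg 2
  have hℓ1 : (1:ℝ) ≤ (ℓ:ℝ) := by exact_mod_cast hℓ
  set k : ℝ := Real.pi * ℓ with hkdef
  have hk0 : 0 < k := by positivity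
  have hfc : Continuous f := hf.continuous
  have hdc : Continuous (deriv f) := hf.continuous_deriv le_rfl
  have hφℓ : ∀ x, φ ℓ x = Real.sqrt 2 * Real.cos (k * x) := by
    intro x; rw [hφ, if_neg (by omega : ¬ℓ = 0)]
  set M : ℝ := ⨆ x : Set.Icc (0:ℝ) 1, |f x.1| with hMdef
  set M' : ℝ := ⨆ x : Set.Icc (0:ℝ) 1, |deriv f x.1| with hM'def
  have hMb : ∀ x ∈ Set.Icc (0:ℝ) 1, |f x| ≤ M := sup_abs_bound f hfc
  have hM'b : ∀ x ∈ Set.Icc (0:ℝ) 1, |deriv f x| ≤ M' := sup_abs_bound _ hdc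
  have hM0 : 0 ≤ M := le_trans (abs_nonneg _) (hMb 0 ⟨le_rfl, zero_le_one⟩)
  have hM'0 : 0 ≤ M' := le_trans (abs_nonneg _) (hM'b 0 ⟨le_rfl, zero_le_one⟩)
  -- rewrite c
  have hccos : c = Real.sqrt 2 * ∫ x in (0:ℝ)..1, f x * Real.cos (k * x) := by
    rw [hc, ← intervalIntegral.integral_const_mul]
    apply intervalIntegral.integral_congr
    intro x _
    simp only [hφℓ]
    ring
  have hcos_cont : Continuous fun x : ℝ => Real.cos (k * x) :=
    Real.continuous_cos.comp (continuous_const.mul continuous_id)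
  have hsin_cont : Continuous fun x : ℝ => Real.sin (k * x) :=
    Real.continuous_sin.comp (continuous_const.mul continuous_id)
  -- |c| ≤ M
  have hc1 : |c| ≤ M := by
    have habs : |∫ x in (0:ℝ)..1, f x * Real.cos (k * x)|
        ≤ ∫ x in (0:ℝ)..1, |f x * Real.cos (k * x)| :=
      intervalIntegral.abs_integral_le_integral_abs zero_le_one
    have hmono : (∫ x in (0:ℝ)..1, |f x * Real.cos (k * x)|)
        ≤ ∫ x in (0:ℝ)..1, M * |Real.cos (k * x)| := by
      apply intervalIntegral.integral_mono_on zero_le_one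
        ((hfc.mul hcos_cont).abs.intervalIntegrable _ _)
        ((continuous_const.mul hcos_cont.abs).intervalIntegrable _ _)
      intro x hx
      show |f x * Real.cos (k * x)| ≤ M * |Real.cos (k * x)|
      rw [abs_mul]
      exact mul_le_mul_of_nonneg_right (hMb x hx) (abs_nonneg _)
    have hval : (∫ x in (0:ℝ)..1, M * |Real.cos (k * x)|) = M * (2 / Real.pi) := by
      rw [intervalIntegral.integral_const_mul, hkdef, int_abs_cos ℓ hℓ]
    rw [hccos, abs_mul, abs_of_nonneg hs2nn]
    have h1 : Real.sqrt 2 * |∫ x in (0:ℝ)..1, f x * Real.cos (k * x)|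
        ≤ Real.sqrt 2 * (M * (2 / Real.pi)) := by
      apply mul_le_mul_of_nonneg_left _ hs2nn
      rw [← hval]; exact le_trans habs hmono
    exact le_trans h1 (aux_two_div_pi M hM0)
  -- integration by parts: |c| ≤ M' / k
  have hc2 : |c| ≤ M' / k := by
    have hkinv : (0:ℝ) ≤ k⁻¹ := le_of_lt (inv_pos.mpr hk0)
    have hu : ∀ x ∈ Set.uIcc (0:ℝ) 1, HasDerivAt f (deriv f x) x := fun x _ =>
      ((hf.differentiable one_ne_zero) x).hasDerivAt
    have hv : ∀ x ∈ Set.uIcc (0:ℝ) 1,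
        HasDerivAt (fun y => k⁻¹ * Real.sin (k * y)) (Real.cos (k * x)) x := by
      intro x _
      have h1 : HasDerivAt (fun y : ℝ => k * y) k x := by
        simpa using (hasDerivAt_id x).const_mul k
      have h2 : HasDerivAt (fun y : ℝ => Real.sin (k * y)) (Real.cos (k * x) * k) x :=
        (Real.hasDerivAt_sin (k * x)).comp x h1
      have h3 := h2.const_mul k⁻¹
      rw [mul_comm (Real.cos (k * x)) k, ← mul_assoc, inv_mul_cancel₀ hk0.ne', one_mul] at h3
      exact h3
    have hibp := intervalIntegral.integral_mul_deriv_eq_deriv_mul hu hv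
      (hdc.intervalIntegrable _ _) (hcos_cont.intervalIntegrable _ _)
    have hsin1 : Real.sin (k * 1) = 0 := by
      rw [mul_one, hkdef, mul_comm]; exact Real.sin_nat_mul_pi ℓ
    rw [mul_zero, Real.sin_zero, hsin1] at hibp
    simp only [mul_zero, zero_mul, sub_zero, zero_sub] at hibp
    -- hibp : ∫ f x * cos (k x) = - ∫ deriv f x * (k⁻¹ * sin (k x))
    have habs : |∫ x in (0:ℝ)..1, deriv f x * (k⁻¹ * Real.sin (k * x))|
        ≤ ∫ x in (0:ℝ)..1, |deriv f x * (k⁻¹ * Real.sin (k * x))| :=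
      intervalIntegral.abs_integral_le_integral_abs zero_le_one
    have hmono : (∫ x in (0:ℝ)..1, |deriv f x * (k⁻¹ * Real.sin (k * x))|)
        ≤ ∫ x in (0:ℝ)..1, (M' * k⁻¹) * |Real.sin (k * x)| := by
      apply intervalIntegral.integral_mono_on zero_le_one
        ((hdc.mul (continuous_const.mul hsin_cont)).abs.intervalIntegrable _ _)
        ((continuous_const.mul hsin_cont.abs).intervalIntegrable _ _)
      intro x hx
      show |deriv f x * (k⁻¹ * Real.sin (k * x))| ≤ M' * k⁻¹ * |Real.sin (k * x)|
      rw [abs_mul, abs_mul, abs_of_nonneg hkinv]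
      calc |deriv f x| * (k⁻¹ * |Real.sin (k * x)|)
          = |deriv f x| * k⁻¹ * |Real.sin (k * x)| := by ring
        _ ≤ M' * k⁻¹ * |Real.sin (k * x)| :=
          mul_le_mul_of_nonneg_right
            (mul_le_mul_of_nonneg_right (hM'b x hx) hkinv) (abs_nonneg _)
    have hval : (∫ x in (0:ℝ)..1, (M' * k⁻¹) * |Real.sin (k * x)|)
        = M' * k⁻¹ * (2 / Real.pi) := by
      rw [intervalIntegral.integral_const_mul, hkdef, int_abs_sin ℓ hℓ]
    rw [hccos, hibp, abs_mul, abs_of_nonneg hs2nn, abs_neg]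
    have h1 : Real.sqrt 2 * |∫ x in (0:ℝ)..1, deriv f x * (k⁻¹ * Real.sin (k * x))|
        ≤ Real.sqrt 2 * (M' * k⁻¹ * (2 / Real.pi)) := by
      apply mul_le_mul_of_nonneg_left _ hs2nn
      rw [← hval]; exact le_trans habs hmono
    refine le_trans h1 ?_
    rw [div_eq_mul_inv]
    exact aux_two_div_pi _ (mul_nonneg hM'0 hkinv)
  -- first pointwise bound
  have hb1 : ∀ x ∈ Set.Icc (0:ℝ) 1, |f x * φ ℓ x - c| ≤ Real.sqrt 2 * M + min M (M'/k) := by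
    intro x hx
    have h1 : |f x * φ ℓ x| ≤ Real.sqrt 2 * M := by
      rw [hφℓ, abs_mul, abs_mul, abs_of_nonneg hs2nn]
      have t1 : |f x| * |Real.cos (k*x)| ≤ M * 1 :=
        mul_le_mul (hMb x hx) (Real.abs_cos_le_one _) (abs_nonneg _) hM0
      have t2 := mul_le_mul_of_nonneg_left t1 hs2nn
      linarith [t2]
    calc |f x * φ ℓ x - c| ≤ |f x * φ ℓ x| + |c| := by
          rw [sub_eq_add_neg]
          exact le_trans (abs_add_le _ _) (le_of_eq (by rw [abs_neg]))
      _ ≤ Real.sqrt 2 * M + min M (M'/k) := add_le_add h1 (le_min hc1 hc2)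
  -- second pointwise bound via a zero of g and MVT
  set g : ℝ → ℝ := fun x => f x * (Real.sqrt 2 * Real.cos (k*x)) - c with hgdef
  have hgc : Continuous g := (hfc.mul (continuous_const.mul hcos_cont)).sub continuous_const
  have hgI : ∫ x in (0:ℝ)..1, g x = 0 := by
    rw [hgdef]
    show ∫ x in (0:ℝ)..1, (f x * (Real.sqrt 2 * Real.cos (k*x)) - c) = 0
    rw [intervalIntegral.integral_sub
      (show IntervalIntegrable (fun x => f x * (Real.sqrt 2 * Real.cos (k*x))) MeasureTheory.volume 0 1
        from (hfc.mul (continuous_const.mul hcos_cont)).intervalIntegrable _ _)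
      intervalIntegrable_const, intervalIntegral.integral_const]
    have heq : (∫ x in (0:ℝ)..1, f x * (Real.sqrt 2 * Real.cos (k*x))) = c := by
      rw [hc]
      apply intervalIntegral.integral_congr
      intro x _
      simp only [hφℓ]
    rw [heq]; simp
  have hzero : ∃ x₀ ∈ Set.Icc (0:ℝ) 1, g x₀ = 0 := by
    have hint : IntervalIntegrable g MeasureTheory.volume 0 1 := hgc.intervalIntegrable _ _
    have hA : ∃ a ∈ Set.Icc (0:ℝ) 1, g a ≤ 0 := by
      by_contra hcon; push_neg at hcon
      have hpos := intervalIntegral.intervalIntegral_pos_of_pos_on hint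
        (fun x hx => hcon x ⟨le_of_lt hx.1, le_of_lt hx.2⟩) zero_lt_one
      linarith [hgI]
    have hB : ∃ b ∈ Set.Icc (0:ℝ) 1, 0 ≤ g b := by
      by_contra hcon; push_neg at hcon
      have hpos := intervalIntegral.intervalIntegral_pos_of_pos_on (f := fun x => -g x)
        hint.neg (fun x hx => neg_pos.mpr (hcon x ⟨le_of_lt hx.1, le_of_lt hx.2⟩)) zero_lt_one
      rw [intervalIntegral.integral_neg, hgI] at hpos; linarith
    obtain ⟨a, ha, hga⟩ := hA
    obtain ⟨b, hb, hgb⟩ := hB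
    have hsub : Set.uIcc a b ⊆ Set.Icc (0:ℝ) 1 := Set.uIcc_subset_Icc ha hb
    have h0m : (0:ℝ) ∈ Set.uIcc (g a) (g b) := Set.mem_uIcc.mpr (Or.inl ⟨hga, hgb⟩)
    obtain ⟨x₀, hx₀, hgx₀⟩ := intermediate_value_uIcc (hgc.continuousOn) h0m
    exact ⟨x₀, hsub hx₀, hgx₀⟩
  obtain ⟨x₀, hx₀, hgx₀⟩ := hzero
  set L : ℝ := Real.sqrt 2 * (k * M + M') with hLdef
  have hL0 : 0 ≤ L := mul_nonneg hs2nn (by nlinarith)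
  set g' : ℝ → ℝ := fun x => deriv f x * (Real.sqrt 2 * Real.cos (k*x))
      + f x * (Real.sqrt 2 * (-Real.sin (k*x) * k)) with hg'def
  have hgd : ∀ x ∈ Set.Icc (0:ℝ) 1, HasDerivWithinAt g (g' x) (Set.Icc 0 1) x := by
    intro x _
    have h1 : HasDerivAt (fun y : ℝ => k * y) k x := by
      simpa using (hasDerivAt_id x).const_mul k
    have h2 : HasDerivAt (fun y : ℝ => Real.cos (k*y)) (-Real.sin (k*x) * k) x :=
      (Real.hasDerivAt_cos (k*x)).comp x h1
    have h3 := h2.const_mul (Real.sqrt 2)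
    have h4 := (((hf.differentiable one_ne_zero) x).hasDerivAt.mul h3).sub_const c
    exact h4.hasDerivWithinAt
  have hgb : ∀ x ∈ Set.Icc (0:ℝ) 1, ‖g' x‖ ≤ L := by
    intro x hx
    have b1 : |deriv f x * (Real.sqrt 2 * Real.cos (k*x))| ≤ Real.sqrt 2 * M' := by
      rw [abs_mul, abs_mul, abs_of_nonneg hs2nn]
      have t1 : |deriv f x| * |Real.cos (k*x)| ≤ M' * 1 :=
        mul_le_mul (hM'b x hx) (Real.abs_cos_le_one _) (abs_nonneg _) hM'0
      have t2 := mul_le_mul_of_nonneg_left t1 hs2nn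
      linarith [t2]
    have b2 : |f x * (Real.sqrt 2 * (-Real.sin (k*x) * k))| ≤ Real.sqrt 2 * (k * M) := by
      rw [abs_mul, abs_mul, abs_mul, abs_neg, abs_of_nonneg hs2nn,
        abs_of_nonneg (le_of_lt hk0)]
      have t1 : |f x| * |Real.sin (k*x)| ≤ M * 1 :=
        mul_le_mul (hMb x hx) (Real.abs_sin_le_one _) (abs_nonneg _) hM0
      have t2 := mul_le_mul_of_nonneg_left t1 (mul_nonneg hs2nn hk0.le)
      linarith [t2]
    rw [Real.norm_eq_abs]
    calc |g' x| ≤ |deriv f x * (Real.sqrt 2 * Real.cos (k*x))|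
          + |f x * (Real.sqrt 2 * (-Real.sin (k*x) * k))| := abs_add_le _ _
      _ ≤ L := by rw [hLdef]; nlinarith [b1, b2]
  have hb2 : ∀ x ∈ Set.Icc (0:ℝ) 1, |f x * φ ℓ x - c| ≤ L := by
    intro x hx
    have h1 := Convex.norm_image_sub_le_of_norm_hasDerivWithin_le hgd hgb
      (convex_Icc (0:ℝ) 1) hx₀ hx
    rw [hgx₀, sub_zero] at h1
    have h2 : ‖x - x₀‖ ≤ 1 := by
      rw [Real.norm_eq_abs, abs_le]
      constructor <;> [linarith [hx.1, hx₀.2]; linarith [hx.2, hx₀.1]]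
    have heq : |f x * φ ℓ x - c| = ‖g x‖ := by
      rw [Real.norm_eq_abs, hgdef]
      simp only [hφℓ]
    rw [heq]
    calc ‖g x‖ ≤ L * ‖x - x₀‖ := h1
      _ ≤ L * 1 := mul_le_mul_of_nonneg_left h2 hL0
      _ = L := mul_one L
  haveI : Nonempty (Set.Icc (0:ℝ) 1) := ⟨⟨0, by norm_num⟩⟩
  apply ciSup_le
  rintro ⟨x, hx⟩
  exact le_min (hb1 x hx) (hb2 x hx)
end
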